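/- arXiv:1904.11072 — 8 statements merged into one kernel-verified Lean document; each statement's English description precedes it below -/
import Mathlib

section
/- Let X be a Cantor space with a fixed compatible metric d, let G be a countable group, and let Φ : G → Homeo(X) be a minimal action (every orbit {Φ(g)(x) : g ∈ G} is dense in X). Then the family of maps {Φ(g) : g ∈ G} is equicontinuous with respect to d if and only if for every clopen subset U ⊆ X the orbit {Φ(g)(U) : g ∈ G} is a finite collection of subsets of X. -/
open Set Topology Filter

section CantorActionDefs

variable {X : Type*} [MetricSpace X] {G : Type*} [Group G]

/-- `Φ : G → Homeo(X)` is a group homomorphism, i.e. an action of `G` on `X` by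
homeomorphisms. -/
def IsActionHom (Φ : G → X ≃ₜ X) : Prop :=
  (∀ x : X, Φ 1 x = x) ∧ ∀ g h : G, ∀ x : X, Φ (g * h) x = Φ g (Φ h x)

/-- The action is minimal: every orbit is dense. -/
def IsMinimalAction (Φ : G → X ≃ₜ X) : Prop :=
  ∀ x : X, Dense (Set.range fun g : G => Φ g x)

/-- The family `{Φ g : g ∈ G}` is equicontinuous with respect to the metric on `X`. -/
def IsEquicontinuousAction (Φ : G → X ≃ₜ X) : Prop :=
  ∀ ε : ℝ, 0 < ε → ∃ δ : ℝ, 0 < δ ∧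
    ∀ g : G, ∀ x y : X, dist x y < δ → dist (Φ g x) (Φ g y) < ε

/-- A Cantor action: a minimal equicontinuous action by homeomorphisms. -/
def IsCantorAction (Φ : G → X ≃ₜ X) : Prop :=
  IsActionHom Φ ∧ IsMinimalAction Φ ∧ IsEquicontinuousAction Φ

/-- A clopen subset adapted to the action: nonempty, clopen, and any translate meeting it
equals it. -/
def IsAdapted (Φ : G → X ≃ₜ X) (U : Set X) : Prop :=
  U.Nonempty ∧ IsClopen U ∧ ∀ g : G, (Φ g '' U ∩ U).Nonempty → Φ g '' U = U

/-- The Ellis (closure) group `G(Φ)`: the closure of `{Φ g : g ∈ G}` in `C(X,X)` with the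
compact-open topology. -/
def actionClosure (Φ : G → X ≃ₜ X) : Set C(X, X) :=
  closure (Set.range fun g : G => (Φ g : C(X, X)))

/-- An adapted neighborhood basis at `x`: a properly descending chain of adapted clopen
sets starting at `X`, containing `x`, with intersection `{x}`. -/
def IsAdaptedBasis (Φ : G → X ≃ₜ X) (x : X) (U : ℕ → Set X) : Prop :=
  U 0 = Set.univ ∧ (∀ ℓ : ℕ, IsAdapted Φ (U ℓ)) ∧ (∀ ℓ : ℕ, x ∈ U ℓ) ∧
    (∀ ℓ : ℕ, U (ℓ + 1) ⊂ U ℓ) ∧ (⋂ ℓ : ℕ, U ℓ) = ({x} : Set X)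

/-- The stabilizer chain `K_ℓ`: elements of the Ellis group fixing `U ℓ` pointwise. -/
def stabChain (Φ : G → X ≃ₜ X) (U : ℕ → Set X) (ℓ : ℕ) : Set C(X, X) :=
  {f ∈ actionClosure Φ | ∀ z ∈ U ℓ, f z = z}

/-- The stabilizer chain is eventually constant (the action is stable along `U`). -/
def IsStableChain (Φ : G → X ≃ₜ X) (U : ℕ → Set X) : Prop :=
  ∃ ℓ₀ : ℕ, ∀ ℓ : ℕ, ℓ₀ ≤ ℓ → stabChain Φ U ℓ = stabChain Φ U ℓ₀

/-- The action of the Ellis group is locally completely quasi-analytic. -/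
def IsLCQA (Φ : G → X ≃ₜ X) : Prop :=
  ∃ ε : ℝ, 0 < ε ∧ ∀ U : Set X, IsAdapted Φ U → Metric.diam U < ε →
    ∀ V : Set X, IsAdapted Φ V → V ⊆ U →
      ∀ f₁ ∈ actionClosure Φ, ∀ f₂ ∈ actionClosure Φ,
        (∀ z ∈ V, f₁ z = f₂ z) → ∀ z ∈ U, f₁ z = f₂ z

/-- `f` is a non-Hausdorff element of the Ellis group at `x`. -/
def IsNonHausdorffElem (Φ : G → X ≃ₜ X) (f : C(X, X)) (x : X) : Prop :=
  f ∈ actionClosure Φ ∧ f x = x ∧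
    (∀ W : Set X, IsClopen W → x ∈ W → ¬ ∀ z ∈ W, f z = z) ∧
    ∃ (xs : ℕ → X) (W : ℕ → Set X), Filter.Tendsto xs Filter.atTop (nhds x) ∧
      ∀ i : ℕ, xs i ∈ W i ∧ IsClopen (W i) ∧ ⇑f '' W i = W i ∧ ∀ z ∈ W i, f z = z

/-- The restrictions to an invariant set `U` of the maps `Φ g` with `Φ g (U) = U`,
as elements of `C(U,U)`. -/
def restrictedMaps (Φ : G → X ≃ₜ X) (U : Set X) : Set C(U, U) :=
  {u : C(U, U) | ∃ g : G, Φ g '' U = U ∧ ∀ z : U, (u z : X) = Φ g (z : X)}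

/-- The stabilizer subgroup `G_U = {g : G | Φ g (U) = U}` of a set `U`. -/
def setStabilizer (Φ : G → X ≃ₜ X) (hΦ : IsActionHom Φ) (U : Set X) : Subgroup G where
  carrier := {g : G | Φ g '' U = U}
  one_mem' := by
    show ⇑(Φ 1) '' U = U
    have h : ⇑(Φ 1) = id := funext hΦ.1
    rw [h, Set.image_id]
  mul_mem' := by
    intro a b ha hb
    show ⇑(Φ (a * b)) '' U = U
    have h : ⇑(Φ (a * b)) = ⇑(Φ a) ∘ ⇑(Φ b) := funext fun z => hΦ.2 a b z
    rw [h, Set.image_comp]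
    rw [show ⇑(Φ b) '' U = U from hb, show ⇑(Φ a) '' U = U from ha]
  inv_mem' := by
    intro a ha
    show ⇑(Φ a⁻¹) '' U = U
    have hcomp : ⇑(Φ a⁻¹) ∘ ⇑(Φ a) = id := funext fun z => by
      show Φ a⁻¹ (Φ a z) = z
      have h2 := hΦ.2 a⁻¹ a z
      rw [inv_mul_cancel] at h2
      rw [← h2]
      exact hΦ.1 z
    calc ⇑(Φ a⁻¹) '' U = ⇑(Φ a⁻¹) '' (⇑(Φ a) '' U) := by
            rw [show ⇑(Φ a) '' U = U from ha]
      _ = (⇑(Φ a⁻¹) ∘ ⇑(Φ a)) '' U := (Set.image_comp _ _ _).symm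
      _ = U := by rw [hcomp, Set.image_id]

end CantorActionDefs

section ChainDefs

variable {G : Type*} [Group G]

/-- A group chain in `G`: descending subgroups starting at `G`, each of finite index in
the previous one. -/
def IsGroupChain (K : ℕ → Subgroup G) : Prop :=
  K 0 = ⊤ ∧ ∀ ℓ : ℕ, K (ℓ + 1) ≤ K ℓ ∧ (K (ℓ + 1)).relIndex (K ℓ) ≠ 0

/-- The inverse limit `lim← G ⧸ C ℓ` of the coset spaces along a chain, as a subset of
the product. -/
def chainLimitSet (C : ℕ → Subgroup G) : Set (∀ ℓ : ℕ, G ⧸ C ℓ) :=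
  {σ | ∀ ℓ : ℕ, ∃ g : G, σ ℓ = (g : G ⧸ C ℓ) ∧ σ (ℓ + 1) = (g : G ⧸ C (ℓ + 1))}

/-- The inverse limit topology on `lim← G ⧸ C ℓ`: the subspace topology from the product
of the discrete coset spaces. -/
def chainLimitTop (C : ℕ → Subgroup G) : TopologicalSpace (chainLimitSet C) :=
  TopologicalSpace.induced Subtype.val
    (@Pi.topologicalSpace ℕ (fun ℓ => G ⧸ C ℓ) fun _ => ⊥)

/-- The basepoint `(e C_ℓ)_ℓ` of the inverse limit. -/
def chainBasepoint (C : ℕ → Subgroup G) : chainLimitSet C :=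
  ⟨fun ℓ => ((1 : G) : G ⧸ C ℓ), fun _ => ⟨1, rfl, rfl⟩⟩

theorem smul_mem_chainLimitSet {C : ℕ → Subgroup G} (g : G) {σ : ∀ ℓ : ℕ, G ⧸ C ℓ}
    (hσ : σ ∈ chainLimitSet C) : (fun ℓ => g • σ ℓ) ∈ chainLimitSet C := by
  intro ℓ
  obtain ⟨k, h1, h2⟩ := hσ ℓ
  refine ⟨g * k, ?_, ?_⟩
  · show g • σ ℓ = _
    rw [h1]; rfl
  · show g • σ (ℓ + 1) = _
    rw [h2]; rfl

/-- The conjugate subgroup `g H g⁻¹`. -/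
def conjSubgroup (g : G) (H : Subgroup G) : Subgroup G :=
  H.map (MulAut.conj g).toMonoidHom

/-- Equivalence of group chains (interlacing). -/
def ChainsEquivalent (Gc Hc : ℕ → Subgroup G) : Prop :=
  ∃ K : ℕ → Subgroup G, IsGroupChain K ∧
    ∃ ls js : ℕ → ℕ, StrictMono ls ∧ StrictMono js ∧
      ∀ k : ℕ, K (2 * k) = Gc (ls k) ∧ K (2 * k + 1) = Hc (js k)

/-- Conjugate equivalence of group chains. -/
def ChainsConjugateEquivalent (Gc Hc : ℕ → Subgroup G) : Prop :=
  ∃ gs : ℕ → G, (∀ ℓ : ℕ, (gs ℓ)⁻¹ * gs (ℓ + 1) ∈ Gc ℓ) ∧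
    ChainsEquivalent (fun ℓ => conjSubgroup (gs ℓ) (Gc ℓ)) Hc

end ChainDefs

section TwoSpaces

variable {X : Type*} [MetricSpace X] {X' : Type*} [MetricSpace X']
variable {G : Type*} [Group G] {G' : Type*} [Group G']

/-- A continuous orbit equivalence between two actions, implemented by a homeomorphism
`h : X → X'` with locally constant orbit transfer functions. -/
def IsContinuousOrbitEquivalence (Φ : G → X ≃ₜ X) (Ψ : G' → X' ≃ₜ X') (h : X ≃ₜ X') :
    Prop :=
  (∀ (x : X) (g : G), ∃ (k : G') (O : Set X), IsOpen O ∧ x ∈ O ∧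
      ∀ z ∈ O, Ψ k (h z) = h (Φ g z)) ∧
    ∀ (y : X') (k : G'), ∃ (g : G) (O : Set X'), IsOpen O ∧ y ∈ O ∧
      ∀ w ∈ O, Φ g (h.symm w) = h.symm (Ψ k w)

end TwoSpaces

private lemma clopen_sep' {X : Type*} [MetricSpace X] [CompactSpace X] {V : Set X}
    (hV : IsClopen V) : ∃ δ > 0, ∀ x y : X, dist x y < δ → (x ∈ V ↔ y ∈ V) := by
  obtain ⟨δ₁, hδ₁, h₁⟩ :=
    hV.isClosed.isCompact.exists_thickening_subset_open hV.isOpen subset_rfl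
  obtain ⟨δ₂, hδ₂, h₂⟩ :=
    hV.compl.isClosed.isCompact.exists_thickening_subset_open hV.compl.isOpen subset_rfl
  refine ⟨min δ₁ δ₂, lt_min hδ₁ hδ₂, fun x y hxy => ?_⟩
  constructor
  · intro hx
    by_contra hy
    have : y ∈ Metric.thickening δ₁ V :=
      Metric.mem_thickening_iff.2 ⟨x, hx, by
        rw [dist_comm]; exact hxy.trans_le (min_le_left _ _)⟩
    exact hy (h₁ this)
  · intro hy
    by_contra hx
    have : y ∈ Metric.thickening δ₂ Vᶜ :=
      Metric.mem_thickening_iff.2 ⟨x, hx, by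
        rw [dist_comm]; exact hxy.trans_le (min_le_right _ _)⟩
    exact (h₂ this) hy

private lemma finite_sep {X : Type*} [MetricSpace X] {F : Set (Set X)} (hF : F.Finite)
    (h : ∀ W ∈ F, ∃ δ > 0, ∀ x y : X, dist x y < δ → (x ∈ W ↔ y ∈ W)) :
    ∃ δ > 0, ∀ W ∈ F, ∀ x y : X, dist x y < δ → (x ∈ W ↔ y ∈ W) := by
  revert h
  refine Set.Finite.induction_on (motive := fun F _ => (∀ W ∈ F, ∃ δ > 0, ∀ x y : X, dist x y < δ → (x ∈ W ↔ y ∈ W)) →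
    ∃ δ > 0, ∀ W ∈ F, ∀ x y : X, dist x y < δ → (x ∈ W ↔ y ∈ W)) F hF ?_ ?_
  · exact fun _ => ⟨1, one_pos, fun W hW => absurd hW (notMem_empty W)⟩
  · intro W F hWF hFfin ih h
    obtain ⟨δ₁, hδ₁, h₁⟩ := h W (mem_insert _ _)
    obtain ⟨δ₂, hδ₂, h₂⟩ := ih fun V hV => h V (mem_insert_of_mem _ hV)
    refine ⟨min δ₁ δ₂, lt_min hδ₁ hδ₂, fun V hV x y hxy => ?_⟩
    rcases hV with rfl | hV
    · exact h₁ x y (hxy.trans_le (min_le_left _ _))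
    · exact h₂ V hV x y (hxy.trans_le (min_le_right _ _))

/-- For a minimal action of a countable group on a Cantor space,
equicontinuity is equivalent to every clopen set having finite orbit. -/
theorem stmt0 {X : Type*} [MetricSpace X] [CompactSpace X] [TotallyDisconnectedSpace X]
    [Nonempty X] (hX : Perfect (Set.univ : Set X))
    {G : Type*} [Group G] [Countable G] (Φ : G → X ≃ₜ X)
    (hact : IsActionHom Φ) (hmin : IsMinimalAction Φ) :
    IsEquicontinuousAction Φ ↔
      ∀ U : Set X, IsClopen U → (Set.range fun g : G => Φ g '' U).Finite := by
  have hinv1 : ∀ (g : G) (x : X), Φ g⁻¹ (Φ g x) = x := by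
    intro g x
    have := hact.2 g⁻¹ g x
    rw [inv_mul_cancel, hact.1 x] at this
    exact this.symm
  have hinv2 : ∀ (g : G) (x : X), Φ g (Φ g⁻¹ x) = x := by
    intro g x
    have := hact.2 g g⁻¹ x
    rw [mul_inv_cancel, hact.1 x] at this
    exact this.symm
  constructor
  · -- equicontinuous → finite orbits of clopen sets
    intro heq U hU
    obtain ⟨ε, hε, hsep⟩ := clopen_sep' hU
    obtain ⟨δ, hδ, hδeq⟩ := heq ε hε
    -- saturation: each V in the range is δ-saturated
    have hsat : ∀ V ∈ (Set.range fun g : G => Φ g '' U), ∀ x ∈ V, ∀ y : X,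
        dist x y < δ → y ∈ V := by
      rintro V ⟨g, rfl⟩ x hx y hxy
      obtain ⟨u, hu, rfl⟩ := hx
      have h1 : dist (Φ g⁻¹ (Φ g u)) (Φ g⁻¹ y) < ε := hδeq g⁻¹ _ _ hxy
      rw [hinv1 g u] at h1
      have h2 : Φ g⁻¹ y ∈ U := (hsep u (Φ g⁻¹ y) h1).1 hu
      exact ⟨Φ g⁻¹ y, h2, hinv2 g y⟩
    obtain ⟨s, -, hsfin, hscover⟩ := finite_cover_balls_of_compact (isCompact_univ : IsCompact (Set.univ : Set X)) hδ
    -- each V in the range is determined by s ∩ V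
    have hdet : ∀ V ∈ (Set.range fun g : G => Φ g '' U), ∀ x ∈ V,
        ∃ c ∈ s ∩ V, dist c x < δ := by
      intro V hV x hx
      have := hscover (mem_univ x)
      simp only [mem_iUnion] at this
      obtain ⟨c, hc, hxc⟩ := this
      rw [Metric.mem_ball] at hxc
      refine ⟨c, ⟨hc, hsat V hV x hx c ?_⟩, by rw [dist_comm]; exact hxc⟩
      exact hxc
    have hinj : Set.InjOn (fun V => s ∩ V) (Set.range fun g : G => Φ g '' U) := by
      intro V₁ hV₁ V₂ hV₂ heq'
      have key : ∀ V V' , V ∈ (Set.range fun g : G => Φ g '' U) →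
          V' ∈ (Set.range fun g : G => Φ g '' U) → s ∩ V = s ∩ V' → V ⊆ V' := by
        intro V V' hV hV' hss x hx
        obtain ⟨c, hc, hcx⟩ := hdet V hV x hx
        rw [hss] at hc
        exact hsat V' hV' c hc.2 x hcx
      exact (key V₁ V₂ hV₁ hV₂ heq').antisymm (key V₂ V₁ hV₂ hV₁ heq'.symm)
    have himfin : ((fun V => s ∩ V) '' (Set.range fun g : G => Φ g '' U)).Finite := by
      apply hsfin.finite_subsets.subset
      rintro W ⟨V, -, rfl⟩
      exact inter_subset_left
    exact Set.Finite.of_finite_image himfin hinj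
  · -- finite orbits of clopen sets → equicontinuous
    intro hfin ε hε
    have hε3 : 0 < ε / 3 := by linarith
    -- clopen cover with small sets
    have hcov : ∀ x : X, ∃ V : Set X, x ∈ V ∧ IsClopen V ∧ V ⊆ Metric.ball x (ε / 3) := by
      intro x
      obtain ⟨V, ⟨hxV, hVclopen⟩, hVsub⟩ :=
        (nhds_basis_clopen x).mem_iff.1 (Metric.ball_mem_nhds x hε3)
      exact ⟨V, hxV, hVclopen, hVsub⟩
    choose V hVmem hVclopen hVsub using hcov
    obtain ⟨t, htcover⟩ :=
      isCompact_univ.elim_finite_subcover (fun x : X => V x)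
        (fun x => (hVclopen x).isOpen) (fun x _ => mem_iUnion.2 ⟨x, hVmem x⟩)
    -- the finite family of all translates
    set F : Set (Set X) := ⋃ x ∈ t, Set.range fun g : G => Φ g '' V x with hF
    have hFfin : F.Finite :=
      Set.Finite.biUnion t.finite_toSet fun x _ => hfin (V x) (hVclopen x)
    have hFsep : ∀ W ∈ F, ∃ δ > 0, ∀ x y : X, dist x y < δ → (x ∈ W ↔ y ∈ W) := by
      intro W hW
      simp only [hF, mem_iUnion] at hW
      obtain ⟨x, -, g, rfl⟩ := hW
      apply clopen_sep'
      show IsClopen (⇑(Φ g) '' V x)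
      rw [← Homeomorph.preimage_symm]
      exact (hVclopen x).preimage (Φ g).symm.continuous
    obtain ⟨δ, hδ, hδsep⟩ := finite_sep hFfin hFsep
    refine ⟨δ, hδ, fun g x y hxy => ?_⟩
    obtain ⟨x₀, hx₀t, hgx⟩ : ∃ x₀, x₀ ∈ t ∧ Φ g x ∈ V x₀ := by
      have := htcover (mem_univ (Φ g x))
      simpa using this
    have hWF : (Φ g⁻¹ '' V x₀) ∈ F := by
      simp only [hF, mem_iUnion]
      exact ⟨x₀, hx₀t, g⁻¹, rfl⟩
    have hxW : x ∈ Φ g⁻¹ '' V x₀ := ⟨Φ g x, hgx, hinv1 g x⟩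
    have hyW : y ∈ Φ g⁻¹ '' V x₀ := (hδsep _ hWF x y hxy).1 hxW
    obtain ⟨w, hw, rfl⟩ := hyW
    have hgy : Φ g (Φ g⁻¹ w) = w := hinv2 g w
    have h1 : dist (Φ g x) x₀ < ε / 3 := (hVsub x₀ hgx)
    have h2 : dist w x₀ < ε / 3 := (hVsub x₀ hw)
    rw [hgy]
    calc dist (Φ g x) w ≤ dist (Φ g x) x₀ + dist w x₀ := dist_triangle_right _ _ _
      _ < ε / 3 + ε / 3 := add_lt_add h1 h2
      _ < ε := by linarith
end

section
/- Let (X,G,Φ) be a Cantor action. For every x ∈ X and every clopen set W ⊆ X with x ∈ W, there exists a clopen set U adapted to the action with x ∈ U ⊆ W. -/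
open Set Topology Filter

/-- Adapted clopen sets exist inside any clopen neighborhood. -/
theorem stmt1 {X : Type*} [MetricSpace X] [CompactSpace X] [TotallyDisconnectedSpace X]
    [Nonempty X] (hX : Perfect (Set.univ : Set X))
    {G : Type*} [Group G] [Countable G] (Φ : G → X ≃ₜ X) (hΦ : IsCantorAction Φ)
    (x : X) (W : Set X) (hW : IsClopen W) (hxW : x ∈ W) :
    ∃ U : Set X, IsAdapted Φ U ∧ x ∈ U ∧ U ⊆ W := by
  obtain ⟨⟨hone, hmul⟩, _hmin, hequi⟩ := hΦ
  have hc : ∀ (a b : G) (y : X), Φ a (Φ b y) = Φ (a * b) y := fun a b y => (hmul a b y).symm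
  have hinv : ∀ (g : G) (y : X), Φ g⁻¹ (Φ g y) = y := fun g y => by
    rw [hc, inv_mul_cancel, hone]
  have hinv' : ∀ (g : G) (y : X), Φ g (Φ g⁻¹ y) = y := fun g y => by
    rw [hc, mul_inv_cancel, hone]
  -- W is stable under small perturbations
  obtain ⟨ε, hε, hth⟩ := hW.isClosed.isCompact.exists_thickening_subset_open hW.isOpen
    subset_rfl
  obtain ⟨δ, hδ, hδε⟩ := hequi ε hε
  have key : ∀ (g : G) (y z : X), dist y z < δ → (Φ g y ∈ W ↔ Φ g z ∈ W) := by
    have base : ∀ (g : G) (y z : X), dist y z < δ → Φ g y ∈ W → Φ g z ∈ W := by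
      intro g y z hd hy
      exact hth (Metric.mem_thickening_iff.2 ⟨Φ g y, hy, by
        rw [dist_comm]; exact hδε g y z hd⟩)
    exact fun g y z hd => ⟨base g y z hd, base g z y (by rwa [dist_comm] at hd)⟩
  set U : Set X := {y | ∀ g : G, (Φ g⁻¹ y ∈ W ↔ Φ g⁻¹ x ∈ W)} with hUdef
  have hxU : x ∈ U := fun g => Iff.rfl
  have hUW : U ⊆ W := by
    intro y hy
    have h1 := hy 1
    rw [inv_one, hone, hone] at h1
    exact h1.mpr hxW
  have hUopen : IsOpen U := by
    refine Metric.isOpen_iff.2 fun y hy => ⟨δ, hδ, fun z hz => ?_⟩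
    intro g
    exact (key g⁻¹ z y (Metric.mem_ball.1 hz)).trans (hy g)
  have hUclosed : IsClosed U := by
    rw [← isOpen_compl_iff]
    refine Metric.isOpen_iff.2 fun y hy => ⟨δ, hδ, fun z hz hzU => ?_⟩
    exact hy fun g => (key g⁻¹ y z (by rw [dist_comm]; exact Metric.mem_ball.1 hz)).trans
      (hzU g)
  have himg : ∀ (k : G) (z : X), z ∈ Φ k '' U ↔ Φ k⁻¹ z ∈ U := by
    intro k z
    constructor
    · rintro ⟨u, hu, rfl⟩
      rwa [hinv]
    · intro hz
      exact ⟨Φ k⁻¹ z, hz, hinv' k z⟩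
  refine ⟨U, ⟨⟨x, hxU⟩, ⟨hUclosed, hUopen⟩, ?_⟩, hxU, hUW⟩
  rintro k ⟨w, hw1, hw2⟩
  have hw1' : Φ k⁻¹ w ∈ U := (himg k w).1 hw1
  have hpair : ∀ g : G, (Φ (g⁻¹ * k⁻¹) w ∈ W ↔ Φ g⁻¹ x ∈ W) := by
    intro g
    have := hw1' g
    rwa [hc] at this
  ext z
  rw [himg k z]
  constructor
  · intro hz g
    have hA := hz (k⁻¹ * g)
    rw [hc, show (k⁻¹ * g)⁻¹ * k⁻¹ = g⁻¹ by group] at hA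
    have hB := hpair (k⁻¹ * g)
    rw [show (k⁻¹ * g)⁻¹ * k⁻¹ = g⁻¹ by group] at hB
    exact hA.trans (hB.symm.trans (hw2 g))
  · intro hz g
    show Φ g⁻¹ (Φ k⁻¹ z) ∈ W ↔ Φ g⁻¹ x ∈ W
    rw [hc, show g⁻¹ * k⁻¹ = (k * g)⁻¹ by group]
    have hp := hpair g
    rw [show g⁻¹ * k⁻¹ = (k * g)⁻¹ by group] at hp
    exact (hz (k * g)).trans ((hw2 (k * g)).symm.trans hp)
end

section
/- Let (X,G,Φ) be a Cantor action and let U ⊆ X be an adapted clopen set. Let Ĥ_U denote the closure in C(U,U) (with the compact-open topology, equivalently uniform convergence) of the set {Φ(g)|_U : g ∈ G_U} of restrictions to U. Then Ĥ_U acts transitively on U: for all y, z ∈ U there exists ĥ ∈ Ĥ_U with ĥ(y) = z. -/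
open Set Topology Filter

/-- The restriction of `Φ g` to an invariant set `U`, as an element of `C(U,U)`. -/
def restrictMapAux {X : Type*} [MetricSpace X] {G : Type*} [Group G] (Φ : G → X ≃ₜ X)
    (U : Set X) (g : G) (h : Φ g '' U = U) : C(U, U) where
  toFun := fun z => ⟨Φ g z, by have := Set.mem_image_of_mem (⇑(Φ g)) z.2; rwa [h] at this⟩
  continuous_toFun := by exact Continuous.subtype_mk ((Φ g).continuous.comp continuous_subtype_val) (fun z => by have := Set.mem_image_of_mem (⇑(Φ g)) z.2; rwa [h] at this)

/-- The closure `Ĥ_U` of the restricted holonomy in `C(U,U)` acts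
transitively on an adapted set `U`. -/
theorem stmt4 {X : Type*} [MetricSpace X] [CompactSpace X] [TotallyDisconnectedSpace X]
    [Nonempty X] (hX : Perfect (Set.univ : Set X))
    {G : Type*} [Group G] [Countable G] (Φ : G → X ≃ₜ X) (hΦ : IsCantorAction Φ)
    (U : Set X) (hU : IsAdapted Φ U) :
    ∀ y z : U, ∃ u ∈ closure (restrictedMaps Φ U), u y = z := by
  obtain ⟨hUne, hUclopen, hUadapt⟩ := hU
  haveI : CompactSpace U := isCompact_iff_compactSpace.mp (hUclopen.isClosed.isCompact)
  -- Equicontinuity of the restricted maps, as a family indexed by `restrictedMaps Φ U`.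
  have heq : Equicontinuous
      (fun (i : restrictedMaps Φ U) => ((i : C(U, U)) : U → U)) := by
    apply UniformEquicontinuous.equicontinuous
    rw [Metric.uniformEquicontinuous_iff]
    intro ε hε
    obtain ⟨δ, hδ, hδε⟩ := hΦ.2.2 ε hε
    refine ⟨δ, hδ, fun x w hxw i => ?_⟩
    obtain ⟨g, hg, hgi⟩ := i.2
    rw [Subtype.dist_eq, hgi x, hgi w]
    rw [Subtype.dist_eq] at hxw
    exact hδε g x w hxw
  -- Arzelà–Ascoli: the closure of the restricted maps is compact in `C(U,U)`.
  haveI : T2Space (UniformOnFun U U {K : Set U | IsCompact K}) :=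
    UniformOnFun.t2Space_of_covering
      (Set.eq_univ_iff_forall.mpr fun x => Set.mem_sUnion.mpr
        ⟨Set.univ, isCompact_univ, Set.mem_univ x⟩)
  have hcpt : IsCompact (closure (restrictedMaps Φ U)) := by
    apply ArzelaAscoli.isCompact_closure_of_isClosedEmbedding
      (F := fun f : C(U, U) => (f : U → U)) (𝔖 := {K : Set U | IsCompact K})
      (fun K hK => hK)
      (ContinuousMap.isUniformEmbedding_toUniformOnFunIsCompact.isClosedEmbedding)
    · intro K _
      exact (heq.equicontinuousOn K)
    · intro K _ x _
      exact ⟨Set.univ, isCompact_univ, fun i _ => Set.mem_univ _⟩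
  intro y z
  -- The evaluation map at `y`.
  have hev : Continuous (fun f : C(U, U) => f y) := continuous_eval_const y
  have himg : IsClosed ((fun f : C(U, U) => f y) '' closure (restrictedMaps Φ U)) :=
    (hcpt.image hev).isClosed
  -- `z` lies in the closure of the image of the evaluation map.
  have hzmem : z ∈ (fun f : C(U, U) => f y) '' closure (restrictedMaps Φ U) := by
    apply himg.closure_subset
    apply closure_mono (Set.image_mono subset_closure)
    rw [Metric.mem_closure_iff]
    intro ε hε
    -- `U` is open, so a small ball around `z` is contained in `U`.
    obtain ⟨r, hr, hball⟩ := Metric.isOpen_iff.mp hUclopen.isOpen (z : X) z.2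
    set ε' := min ε r with hε'def
    have hε' : 0 < ε' := lt_min hε hr
    -- minimality: the orbit of `y` is dense, so it enters the ball around `z`.
    have hdense := hΦ.2.1 (y : X)
    have hz : (z : X) ∈ closure (Set.range fun g : G => Φ g (y : X)) :=
      hdense (z : X)
    rw [Metric.mem_closure_iff] at hz
    obtain ⟨b, ⟨g, rfl⟩, hb⟩ := hz ε' hε'
    have hbU : Φ g (y : X) ∈ U := hball (by
      rw [Metric.mem_ball, dist_comm]
      exact lt_of_lt_of_le hb (min_le_right ε r))
    have hgU : Φ g '' U = U := hUadapt g ⟨Φ g (y : X), ⟨Set.mem_image_of_mem _ y.2, hbU⟩⟩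
    refine ⟨⟨Φ g (y : X), hbU⟩, ⟨restrictMapAux Φ U g hgU, ⟨g, hgU, fun w => rfl⟩, rfl⟩, ?_⟩
    rw [Subtype.dist_eq]
    exact lt_of_lt_of_le hb (min_le_left ε r)
  obtain ⟨u, hu, huy⟩ := hzmem
  exact ⟨u, hu, huy⟩
end

section
/- Let (X,G,Φ) be a Cantor action and let U ⊆ X be an adapted clopen set. A continuous map u : U → U lies in the closure Ĥ_U of {Φ(g)|_U : g ∈ G_U} in C(U,U) (compact-open topology) if and only if there exists f ∈ G(Φ) with f(U) = U and f|_U = u. That is, Ĥ_U = { f|_U : f ∈ G(Φ), f(U) = U }. -/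
open Set Topology Filter

section Stmt5Aux

variable {X : Type*} [MetricSpace X] [CompactSpace X] {G : Type*} [Group G]

lemma ellis_uniformEquicontinuous (Φ : G → X ≃ₜ X) (hE : IsEquicontinuousAction Φ) :
    UniformEquicontinuous (fun g : G => ⇑(Φ g)) := by
  rw [Metric.uniformEquicontinuous_iff]
  intro ε hε
  obtain ⟨δ, hδ, h⟩ := hE ε hε
  exact ⟨δ, hδ, fun x y hxy g => h g x y hxy⟩

lemma ellis_isCompact (Φ : G → X ≃ₜ X) (hE : IsEquicontinuousAction Φ) :
    IsCompact (actionClosure Φ) := by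
  have hEq := ellis_uniformEquicontinuous Φ hE
  have hclemb : IsClosedEmbedding
      (@ContinuousMap.toUniformOnFunIsCompact X X _ _) := by
    refine ⟨ContinuousMap.isUniformEmbedding_toUniformOnFunIsCompact.isEmbedding, ?_⟩
    rw [ContinuousMap.range_toUniformOnFunIsCompact]
    exact UniformOnFun.isClosed_setOf_continuous
      CompactlyCoherentSpace.isCoherentWith
  set s : Set C(X, X) := Set.range fun g : G => (Φ g : C(X, X)) with hs
  have heqc : ∀ K ∈ {K : Set X | IsCompact K},
      EquicontinuousOn ((fun f : C(X, X) => ⇑f) ∘ ((↑) : s → C(X, X))) K := by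
    intro K _
    have hUE : UniformEquicontinuous ((fun f : C(X, X) => ⇑f) ∘ ((↑) : s → C(X, X))) := ?_
    · exact hUE.equicontinuous.equicontinuousOn K
    rw [Metric.uniformEquicontinuous_iff]
    intro ε hε
    obtain ⟨δ, hδ, h⟩ := hE ε hε
    refine ⟨δ, hδ, fun x y hxy i => ?_⟩
    obtain ⟨g, hg⟩ := i.2
    have : ⇑(i.1) = ⇑(Φ g) := by rw [← hg]; rfl
    simp only [Function.comp_apply, this]
    exact h g x y hxy
  show IsCompact (closure s)
  refine ArzelaAscoli.isCompact_closure_of_isClosedEmbedding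
    (𝔖 := {K : Set X | IsCompact K}) (F := fun f : C(X, X) => ⇑f)
    (fun K hK => hK) hclemb heqc ?_
  exact fun K _ x _ => ⟨Set.univ, isCompact_univ, fun i _ => Set.mem_univ _⟩

lemma stab_mem_image {Φ : G → X ≃ₜ X} {U : Set X} {g : G} (hg : ⇑(Φ g) '' U = U)
    {x : X} (hx : x ∈ U) : Φ g x ∈ U := hg ▸ Set.mem_image_of_mem _ hx

lemma stab_inv {Φ : G → X ≃ₜ X} (hhom : IsActionHom Φ) {U : Set X} {g : G}
    (hg : ⇑(Φ g) '' U = U) : ⇑(Φ g⁻¹) '' U = U := by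
  have h1 : g ∈ setStabilizer Φ hhom U := hg
  exact (setStabilizer Φ hhom U).inv_mem h1

end Stmt5Aux

/-- `Ĥ_U` consists exactly of the restrictions to `U` of the elements of
the Ellis group `G(Φ)` preserving `U`. -/
theorem stmt5 {X : Type*} [MetricSpace X] [CompactSpace X] [TotallyDisconnectedSpace X]
    [Nonempty X] (hX : Perfect (Set.univ : Set X))
    {G : Type*} [Group G] [Countable G] (Φ : G → X ≃ₜ X) (hΦ : IsCantorAction Φ)
    (U : Set X) (hU : IsAdapted Φ U) :
    ∀ u : C(U, U), u ∈ closure (restrictedMaps Φ U) ↔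
      ∃ f ∈ actionClosure Φ, ⇑f '' U = U ∧ ∀ z : U, (u z : X) = f (z : X) := by
  obtain ⟨hhom, hmin, hequi⟩ := hΦ
  obtain ⟨hne, hclopen, hadapt⟩ := hU
  haveI : CompactSpace ↥U := isCompact_iff_compactSpace.mp hclopen.1.isCompact
  haveI : Nonempty ↥U := hne.to_subtype
  have hcomp : IsCompact (actionClosure Φ) := ellis_isCompact Φ hequi
  intro u
  constructor
  · intro hu
    rw [mem_closure_iff_seq_limit] at hu
    obtain ⟨v, hv_mem, hv_tend⟩ := hu
    choose g hgU hg_eq using hv_mem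
    set F : ℕ → C(X, X) := fun n => (Φ (g n) : C(X, X)) with hF
    have hFmem : ∀ n, F n ∈ actionClosure Φ := fun n =>
      subset_closure (Set.mem_range_self _)
    obtain ⟨f, hf_mem, φ, hφ, hFf⟩ := hcomp.tendsto_subseq hFmem
    set H : ℕ → C(X, X) := fun n => (Φ (g (φ n))⁻¹ : C(X, X)) with hHdef
    have hHmem : ∀ n, H n ∈ actionClosure Φ := fun n =>
      subset_closure (Set.mem_range_self _)
    obtain ⟨h, hh_mem, ψ, hψ, hHh⟩ := hcomp.tendsto_subseq hHmem
    set σ : ℕ → ℕ := φ ∘ ψ with hσ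
    have hFσ : Tendsto (fun n => F (σ n)) atTop (𝓝 f) := hFf.comp hψ.tendsto_atTop
    have hHσ : Tendsto (fun n => (Φ (g (σ n))⁻¹ : C(X, X))) atTop (𝓝 h) := hHh
    -- pointwise convergence
    have hFpt : ∀ x : X, Tendsto (fun n => Φ (g (σ n)) x) atTop (𝓝 (f x)) := fun x =>
      ((continuous_eval_const x).tendsto f).comp hFσ
    have hHpt : ∀ x : X, Tendsto (fun n => Φ (g (σ n))⁻¹ x) atTop (𝓝 (h x)) := fun x =>
      ((continuous_eval_const x).tendsto h).comp hHσ
    have hdist0 : Tendsto (fun n => dist f (F (σ n))) atTop (𝓝 0) := by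
      have := tendsto_iff_dist_tendsto_zero.mp hFσ
      simpa [dist_comm] using this
    -- f maps U into U
    have hfU1 : ∀ x ∈ U, f x ∈ U := by
      intro x hx
      exact hclopen.1.mem_of_tendsto (hFpt x)
        (Filter.Eventually.of_forall fun n => stab_mem_image (hgU (σ n)) hx)
    -- h maps U into U
    have hhU1 : ∀ x ∈ U, h x ∈ U := by
      intro x hx
      exact hclopen.1.mem_of_tendsto (hHpt x)
        (Filter.Eventually.of_forall fun n =>
          stab_mem_image (stab_inv hhom (hgU (σ n))) hx)
    -- f ∘ h = id
    have hfh : ∀ x : X, f (h x) = x := by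
      intro x
      have h2 : Tendsto (fun n => f (Φ (g (σ n))⁻¹ x)) atTop (𝓝 (f (h x))) :=
        (f.continuous.tendsto _).comp (hHpt x)
      have h3 : Tendsto (fun n => Φ (g (σ n)) (Φ (g (σ n))⁻¹ x)) atTop (𝓝 (f (h x))) := by
        refine h2.congr_dist (squeeze_zero (fun n => dist_nonneg)
          (fun n => ContinuousMap.dist_apply_le_dist (f := f) (g := F (σ n)) _) hdist0)
      have h4 : (fun n => Φ (g (σ n)) (Φ (g (σ n))⁻¹ x)) = fun _ => x := by
        funext n
        have e1 := hhom.2 (g (σ n)) (g (σ n))⁻¹ x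
        rw [mul_inv_cancel] at e1
        rw [← e1]
        exact hhom.1 x
      rw [h4] at h3
      exact tendsto_nhds_unique h3 tendsto_const_nhds
    have hfU : ⇑f '' U = U := by
      apply Set.Subset.antisymm
      · rintro _ ⟨x, hx, rfl⟩
        exact hfU1 x hx
      · intro x hx
        exact ⟨h x, hhU1 x hx, hfh x⟩
    refine ⟨f, hf_mem, hfU, ?_⟩
    intro z
    have t1 : Tendsto (fun n => ((v (σ n) z : ↥U) : X)) atTop (𝓝 ((u z : ↥U) : X)) := by
      have tz : Tendsto (fun n => v (σ n) z) atTop (𝓝 (u z)) :=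
        ((continuous_eval_const z).tendsto u).comp
          (hv_tend.comp (hφ.comp hψ).tendsto_atTop)
      exact (continuous_subtype_val.tendsto _).comp tz
    have t2 : Tendsto (fun n => ((v (σ n) z : ↥U) : X)) atTop (𝓝 (f (z : X))) := by
      have : (fun n => ((v (σ n) z : ↥U) : X)) = fun n => Φ (g (σ n)) (z : X) := by
        funext n; exact hg_eq (σ n) z
      rw [this]
      exact hFpt (z : X)
    exact tendsto_nhds_unique t1 t2
  · rintro ⟨f, hf, hfU, hfu⟩
    rw [Metric.mem_closure_iff]
    intro ε hε
    obtain ⟨x₀, hx₀⟩ := hne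
    have hfx₀ : f x₀ ∈ U := hfU ▸ Set.mem_image_of_mem _ hx₀
    obtain ⟨r, hr, hball⟩ := Metric.isOpen_iff.mp hclopen.2 (f x₀) hfx₀
    have hδ : 0 < min ε r := lt_min hε hr
    obtain ⟨b, hb_mem, hb_dist⟩ := Metric.mem_closure_iff.mp hf (min ε r) hδ
    obtain ⟨g₀, rfl⟩ := hb_mem
    have hgx₀ : Φ g₀ x₀ ∈ U := by
      apply hball
      rw [Metric.mem_ball, dist_comm]
      calc dist (f x₀) (Φ g₀ x₀) ≤ dist f (Φ g₀ : C(X, X)) :=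
            ContinuousMap.dist_apply_le_dist (f := f) (g := (Φ g₀ : C(X, X))) x₀
        _ < min ε r := hb_dist
        _ ≤ r := min_le_right _ _
    have hg₀U : ⇑(Φ g₀) '' U = U :=
      hadapt g₀ ⟨Φ g₀ x₀, ⟨Set.mem_image_of_mem _ hx₀, hgx₀⟩⟩
    set w : C(↥U, ↥U) := ⟨fun z => ⟨Φ g₀ (z : X), stab_mem_image hg₀U z.2⟩,
      Continuous.subtype_mk ((Φ g₀).continuous.comp continuous_subtype_val) _⟩ with hw
    refine ⟨w, ⟨g₀, hg₀U, fun z => rfl⟩, ?_⟩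
    rw [ContinuousMap.dist_lt_iff hε]
    intro z
    rw [Subtype.dist_eq]
    calc dist ((u z : ↥U) : X) ((w z : ↥U) : X) = dist (f (z : X)) (Φ g₀ (z : X)) := by
          rw [hfu z]; rfl
      _ ≤ dist f (Φ g₀ : C(X, X)) :=
            ContinuousMap.dist_apply_le_dist (f := f) (g := (Φ g₀ : C(X, X))) _
      _ < min ε r := hb_dist
      _ ≤ ε := min_le_left _ _
end

section
/- Let (X,G,Φ) be a Cantor action and {U_ℓ} an adapted neighborhood basis at x ∈ X, with group chain G_ℓ = G_{U_ℓ}, normal cores C_ℓ, and inverse limit group Ĝ_∞. Then: for every f ∈ G(Φ) and every ℓ ≥ 0 there is a unique coset gC_ℓ ∈ G/C_ℓ such that f(Φ(h)(U_ℓ)) = Φ(gh)(U_ℓ) for all h ∈ G; the resulting map Θ̂ : G(Φ) → Ĝ_∞, Θ̂(f) := (gC_ℓ)_ℓ, is a bijection which is a homeomorphism for the subspace topologies and satisfies Θ̂(f ∘ f') = Θ̂(f)·Θ̂(f') for all f, f' ∈ G(Φ) (in particular G(Φ) is closed under composition and Θ̂ is an isomorphism of topological groups), and Θ̂(Φ(g))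 = (gC_ℓ)_ℓ for every g ∈ G. -/
open Set Topology Filter

set_option linter.unusedSectionVars false
set_option maxHeartbeats 1000000

section Aux

variable {X : Type*} [MetricSpace X] [CompactSpace X] [Nonempty X]
variable {G : Type*} [Group G] {Φ : G → X ≃ₜ X} {V : Set X}

theorem aux_coe (g : G) : ⇑(Φ g : C(X, X)) = ⇑(Φ g) := rfl

theorem aux_img_comp (hΦ : IsActionHom Φ) (g h : G) (s : Set X) :
    Φ g '' (Φ h '' s) = Φ (g * h) '' s := by
  rw [← Set.image_comp]
  exact Set.image_congr' fun z => (hΦ.2 g h z).symm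

theorem aux_apply_inv (hΦ : IsActionHom Φ) (g : G) (z : X) : Φ g (Φ g⁻¹ z) = z := by
  have h := hΦ.2 g g⁻¹ z
  rw [mul_inv_cancel] at h
  rw [← h, hΦ.1]

theorem aux_translate_eq (hΦ : IsActionHom Φ) (hU : IsAdapted Φ V) {g h : G}
    (hne : (Φ g '' V ∩ Φ h '' V).Nonempty) : Φ g '' V = Φ h '' V := by
  obtain ⟨z, hzg, hzh⟩ := hne
  have hmem : Φ h⁻¹ z ∈ Φ (h⁻¹ * g) '' V ∩ V := by
    constructor
    · obtain ⟨u, hu, rfl⟩ := hzg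
      exact ⟨u, hu, hΦ.2 h⁻¹ g u⟩
    · obtain ⟨u, hu, rfl⟩ := hzh
      have := hΦ.2 h⁻¹ h u
      rw [inv_mul_cancel, hΦ.1] at this
      rw [← this]; exact hu
  have := hU.2.2 (h⁻¹ * g) ⟨_, hmem⟩
  have h2 : Φ h '' (Φ (h⁻¹ * g) '' V) = Φ h '' V := by rw [this]
  rw [aux_img_comp hΦ] at h2
  rw [← h2]
  rw [show h * (h⁻¹ * g) = g by group]

theorem aux_exists_translate (hΦ : IsActionHom Φ) (hmin : IsMinimalAction Φ)
    (hU : IsAdapted Φ V) (z : X) : ∃ g : G, z ∈ Φ g '' V := by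
  obtain ⟨y, ⟨g, rfl⟩, hy⟩ := (hmin z).exists_mem_open hU.2.1.2 hU.1
  exact ⟨g⁻¹, Φ g z, hy, by
    have h := hΦ.2 g⁻¹ g z
    rw [inv_mul_cancel, hΦ.1] at h
    exact h.symm⟩

theorem aux_finite (hΦ : IsActionHom Φ) (hmin : IsMinimalAction Φ) (hU : IsAdapted Φ V) :
    ∃ S : Finset G, ∀ g : G, ∃ h ∈ S, Φ g '' V = Φ h '' V := by
  have hcover : (Set.univ : Set X) ⊆ ⋃ g : G, Φ g '' V := fun z _ => by
    obtain ⟨g, hg⟩ := aux_exists_translate hΦ hmin hU z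
    exact Set.mem_iUnion.mpr ⟨g, hg⟩
  obtain ⟨S, hS⟩ := isCompact_univ.elim_finite_subcover (fun g : G => Φ g '' V)
    (fun g => (Φ g).isOpen_image.mpr hU.2.1.2) hcover
  refine ⟨S, fun g => ?_⟩
  obtain ⟨u, hu⟩ := hU.1
  have hz : Φ g u ∈ Φ g '' V := ⟨u, hu, rfl⟩
  obtain ⟨h, hh, hmem⟩ := Set.mem_iUnion₂.mp (hS (Set.mem_univ (Φ g u)))
  exact ⟨h, hh, aux_translate_eq hΦ hU ⟨Φ g u, hz, hmem⟩⟩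

theorem aux_gap (hΦ : IsActionHom Φ) (hmin : IsMinimalAction Φ) (hU : IsAdapted Φ V) :
    ∃ δ : ℝ, 0 < δ ∧ ∀ g : G, ∀ z w : X, w ∈ Φ g '' V → dist z w < δ → z ∈ Φ g '' V := by
  obtain ⟨S, hS⟩ := aux_finite hΦ hmin hU
  have hSne : S.Nonempty := by obtain ⟨h, hh, -⟩ := hS 1; exact ⟨h, hh⟩
  have key : ∀ h : G, ∃ δ : ℝ, 0 < δ ∧ Metric.thickening δ (Φ h '' V) ⊆ Φ h '' V := by
    intro h
    have hcomp : IsCompact (Φ h '' V) := (hU.2.1.1.isCompact).image (Φ h).continuous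
    have hopen : IsOpen (Φ h '' V) := (Φ h).isOpen_image.mpr hU.2.1.2
    exact hcomp.exists_thickening_subset_open hopen Set.Subset.rfl
  choose d hd1 hd2 using key
  refine ⟨S.inf' hSne d, ?_, ?_⟩
  · exact (Finset.lt_inf'_iff hSne).mpr fun b _ => hd1 b
  · intro g z w hw hzw
    obtain ⟨h, hh, heq⟩ := hS g
    rw [heq] at hw ⊢
    apply hd2 h
    apply Metric.thickening_mono (Finset.inf'_le d hh)
    exact Metric.mem_thickening_iff.mpr ⟨w, hw, hzw⟩

theorem aux_surj (hΦ : IsActionHom Φ) (f : C(X, X)) (hf : f ∈ actionClosure Φ) :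
    Function.Surjective ⇑f := by
  rw [← Set.range_eq_univ]
  have hclosed : IsClosed (Set.range ⇑f) := (isCompact_range f.continuous).isClosed
  apply Set.eq_univ_of_forall
  intro y
  rw [← hclosed.closure_eq, Metric.mem_closure_iff]
  intro ε hε
  obtain ⟨b, hb, hdist⟩ := Metric.mem_closure_iff.mp hf ε hε
  obtain ⟨g, rfl⟩ := hb
  refine ⟨f (Φ g⁻¹ y), Set.mem_range_self _, ?_⟩
  calc dist y (f (Φ g⁻¹ y)) = dist ((Φ g : C(X, X)) (Φ g⁻¹ y)) (f (Φ g⁻¹ y)) := by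
        rw [show ((Φ g : C(X, X)) (Φ g⁻¹ y)) = y from aux_apply_inv hΦ g y]
    _ ≤ dist (Φ g : C(X, X)) f := ContinuousMap.dist_apply_le_dist _
    _ < ε := by rwa [dist_comm] at hdist

end Aux

section Aux2

variable {X : Type*} [MetricSpace X] [CompactSpace X] [Nonempty X]
variable {G : Type*} [Group G] {Φ : G → X ≃ₜ X} {V : Set X}

/-- `g` implements `f` on the translates of `V`. -/
def AuxWorks (Φ : G → X ≃ₜ X) (V : Set X) (f : C(X, X)) (g : G) : Prop :=
  ∀ h : G, ⇑f '' (Φ h '' V) = Φ (g * h) '' V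

theorem aux_mem_stab (hΦ : IsActionHom Φ) {g : G} :
    g ∈ setStabilizer Φ hΦ V ↔ Φ g '' V = V := Iff.rfl

theorem aux_mem_core (hΦ : IsActionHom Φ) {a : G} :
    a ∈ (setStabilizer Φ hΦ V).normalCore ↔ ∀ b : G, Φ (b * a * b⁻¹) '' V = V := Iff.rfl

theorem aux_eq_of_subset (hΦ : IsActionHom Φ) (hmin : IsMinimalAction Φ)
    (hU : IsAdapted Φ V) {f : C(X, X)} (hf : f ∈ actionClosure Φ) {g : G}
    (hsub : ∀ h : G, ⇑f '' (Φ h '' V) ⊆ Φ (g * h) '' V) : AuxWorks Φ V f g := by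
  intro h
  refine Set.Subset.antisymm (hsub h) ?_
  intro y hy
  obtain ⟨z, rfl⟩ := aux_surj hΦ f hf y
  obtain ⟨h', hz⟩ := aux_exists_translate hΦ hmin hU z
  have hy' : f z ∈ Φ (g * h') '' V := hsub h' (Set.mem_image_of_mem _ hz)
  have heq : Φ (g * h) '' V = Φ (g * h') '' V := aux_translate_eq hΦ hU ⟨f z, hy, hy'⟩
  have heq2 : Φ h '' V = Φ h' '' V := by
    have := congrArg (fun s => Φ g⁻¹ '' s) heq
    simpa only [aux_img_comp hΦ, show g⁻¹ * (g * h) = h by group,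
      show g⁻¹ * (g * h') = h' by group] using this
  exact Set.mem_image_of_mem _ (heq2 ▸ hz)

theorem aux_exists_works (hΦ : IsActionHom Φ) (hmin : IsMinimalAction Φ)
    (hU : IsAdapted Φ V) {f : C(X, X)} (hf : f ∈ actionClosure Φ) :
    ∃ g : G, AuxWorks Φ V f g := by
  obtain ⟨δ, hδ, hgap⟩ := aux_gap hΦ hmin hU
  obtain ⟨b, hb, hdist⟩ := Metric.mem_closure_iff.mp hf δ hδ
  obtain ⟨g, rfl⟩ := hb
  refine ⟨g, aux_eq_of_subset hΦ hmin hU hf ?_⟩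
  rintro h y ⟨z, hz, rfl⟩
  apply hgap (g * h) (f z) (Φ g z)
  · rw [← aux_img_comp hΦ]
    exact Set.mem_image_of_mem _ hz
  · calc dist (f z) (Φ g z) = dist (f z) ((Φ g : C(X, X)) z) := rfl
      _ ≤ dist f (Φ g : C(X, X)) := ContinuousMap.dist_apply_le_dist _
      _ < δ := hdist

theorem aux_works_congr (hΦ : IsActionHom Φ) {f : C(X, X)} {g g' : G}
    (hw : AuxWorks Φ V f g) (hcore : g⁻¹ * g' ∈ (setStabilizer Φ hΦ V).normalCore) :
    AuxWorks Φ V f g' := by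
  intro h
  rw [hw h]
  have hc : Φ (h⁻¹ * (g⁻¹ * g') * h) '' V = V := by
    have := (aux_mem_core hΦ).mp hcore h⁻¹
    rwa [inv_inv] at this
  have : Φ (g' * h) '' V = Φ (g * h) '' (Φ (h⁻¹ * (g⁻¹ * g') * h) '' V) := by
    rw [aux_img_comp hΦ, show g * h * (h⁻¹ * (g⁻¹ * g') * h) = g' * h by group]
  rw [this, hc]

theorem aux_works_unique (hΦ : IsActionHom Φ) {f : C(X, X)} {g g' : G}
    (hw : AuxWorks Φ V f g) (hw' : AuxWorks Φ V f g') :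
    g'⁻¹ * g ∈ (setStabilizer Φ hΦ V).normalCore := by
  rw [aux_mem_core hΦ]
  intro b
  have h1 : Φ (g * b⁻¹) '' V = Φ (g' * b⁻¹) '' V := by rw [← hw b⁻¹, ← hw' b⁻¹]
  have h2 := congrArg (fun s => Φ (b * g'⁻¹) '' s) h1
  simp only [aux_img_comp hΦ] at h2
  rw [show b * g'⁻¹ * (g' * b⁻¹) = 1 by group, show b * g'⁻¹ * (g * b⁻¹) = b * (g'⁻¹ * g) * b⁻¹ by group] at h2
  rw [h2]
  have : ⇑(Φ (1 : G)) = id := funext hΦ.1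
  rw [this, Set.image_id]

theorem aux_works_iff (hΦ : IsActionHom Φ) {f : C(X, X)} {g g' : G}
    (hw : AuxWorks Φ V f g) :
    AuxWorks Φ V f g' ↔
      ((g' : G ⧸ (setStabilizer Φ hΦ V).normalCore) = (g : G ⧸ (setStabilizer Φ hΦ V).normalCore)) := by
  rw [QuotientGroup.eq]
  constructor
  · intro hw'
    exact aux_works_unique hΦ hw hw'
  · intro hmem
    exact aux_works_congr hΦ hw (by simpa using Subgroup.inv_mem _ hmem)

end Aux2
section Aux3

variable {X : Type*} [MetricSpace X] [CompactSpace X] [Nonempty X]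
variable {G : Type*} [Group G] {Φ : G → X ≃ₜ X} {x : X} {U : ℕ → Set X}

theorem aux_antitone (hb : IsAdaptedBasis Φ x U) {m n : ℕ} (h : m ≤ n) : U n ⊆ U m := by
  induction h with
  | refl => exact Set.Subset.rfl
  | step h ih => exact Set.Subset.trans (hb.2.2.2.1 _).subset ih

theorem aux_stab_mono (hΦ : IsActionHom Φ) (hb : IsAdaptedBasis Φ x U) (ℓ : ℕ) :
    setStabilizer Φ hΦ (U (ℓ + 1)) ≤ setStabilizer Φ hΦ (U ℓ) := by
  intro g hg
  rw [aux_mem_stab hΦ] at hg ⊢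
  apply (hb.2.1 ℓ).2.2
  obtain ⟨u, hu⟩ := (hb.2.1 (ℓ + 1)).1
  refine ⟨u, ?_, (hb.2.2.2.1 ℓ).subset hu⟩
  rw [← hg] at hu
  obtain ⟨v, hv, rfl⟩ := hu
  exact Set.mem_image_of_mem _ ((hb.2.2.2.1 ℓ).subset hv)

theorem aux_core_anti (hΦ : IsActionHom Φ) (hb : IsAdaptedBasis Φ x U) {m n : ℕ} (h : m ≤ n) :
    (setStabilizer Φ hΦ (U n)).normalCore ≤ (setStabilizer Φ hΦ (U m)).normalCore := by
  induction h with
  | refl => exact le_rfl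
  | step h ih => exact le_trans (Subgroup.normalCore_mono (aux_stab_mono hΦ hb _)) ih

theorem aux_coe_down (hΦ : IsActionHom Φ) (hb : IsAdaptedBasis Φ x U) {m n : ℕ} (h : m ≤ n)
    {a b : G}
    (hab : (a : G ⧸ (setStabilizer Φ hΦ (U n)).normalCore) = (b : G ⧸ (setStabilizer Φ hΦ (U n)).normalCore)) :
    (a : G ⧸ (setStabilizer Φ hΦ (U m)).normalCore) = (b : G ⧸ (setStabilizer Φ hΦ (U m)).normalCore) := by
  rw [QuotientGroup.eq] at hab ⊢
  exact aux_core_anti hΦ hb h hab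

theorem aux_works_down (hΦ : IsActionHom Φ) (hmin : IsMinimalAction Φ)
    (hb : IsAdaptedBasis Φ x U) {f : C(X, X)} (hf : f ∈ actionClosure Φ) {g : G} {ℓ : ℕ}
    (hw : AuxWorks Φ (U (ℓ + 1)) f g) : AuxWorks Φ (U ℓ) f g := by
  apply aux_eq_of_subset hΦ hmin (hb.2.1 ℓ) hf
  rintro h y ⟨z, hz, rfl⟩
  obtain ⟨h', hz'⟩ := aux_exists_translate hΦ hmin (hb.2.1 (ℓ + 1)) z
  have hzℓ : z ∈ Φ h' '' U ℓ := Set.image_mono (hb.2.2.2.1 ℓ).subset hz'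
  have heq : Φ h' '' U ℓ = Φ h '' U ℓ := aux_translate_eq hΦ (hb.2.1 ℓ) ⟨z, hzℓ, hz⟩
  have hfz : f z ∈ Φ (g * h') '' U (ℓ + 1) := by
    rw [← hw h']
    exact Set.mem_image_of_mem _ hz'
  have hfzℓ : f z ∈ Φ (g * h') '' U ℓ := Set.image_mono (hb.2.2.2.1 ℓ).subset hfz
  have heq2 : Φ (g * h') '' U ℓ = Φ (g * h) '' U ℓ := by
    have := congrArg (fun s => Φ g '' s) heq
    simpa only [aux_img_comp hΦ] using this
  rw [← heq2]
  exact hfzℓ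

theorem aux_small (heq : IsEquicontinuousAction Φ) (hb : IsAdaptedBasis Φ x U) :
    ∀ ε : ℝ, 0 < ε → ∃ m : ℕ, ∀ g : G, ∀ z ∈ Φ g '' U m, ∀ w ∈ Φ g '' U m, dist z w < ε := by
  intro ε hε
  obtain ⟨δ, hδ, hde⟩ := heq ε hε
  have hball : ∃ m, U m ⊆ Metric.ball x (δ / 2) := by
    by_contra hcon
    push_neg at hcon
    have hne : ∀ m, (U m \ Metric.ball x (δ / 2)).Nonempty := by
      intro m
      obtain ⟨z, hz1, hz2⟩ := Set.not_subset.mp (hcon m)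
      exact ⟨z, hz1, hz2⟩
    have hd : ∀ m, (U (m + 1) \ Metric.ball x (δ / 2)) ⊆ (U m \ Metric.ball x (δ / 2)) :=
      fun m => Set.diff_subset_diff_left (hb.2.2.2.1 m).subset
    have hcl : ∀ m, IsClosed (U m \ Metric.ball x (δ / 2)) :=
      fun m => ((hb.2.1 m).2.1.1).sdiff Metric.isOpen_ball
    obtain ⟨z, hz⟩ := IsCompact.nonempty_iInter_of_sequence_nonempty_isCompact_isClosed
      _ hd hne ((hcl 0).isCompact) hcl
    rw [Set.mem_iInter] at hz
    have hzx : z ∈ ⋂ m, U m := Set.mem_iInter.mpr fun m => (hz m).1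
    rw [hb.2.2.2.2] at hzx
    have hzeq : z = x := hzx
    exact (hz 0).2 (hzeq ▸ Metric.mem_ball_self (by linarith))
  obtain ⟨m, hm⟩ := hball
  refine ⟨m, ?_⟩
  rintro g z ⟨a, ha, rfl⟩ w ⟨b, hbm, rfl⟩
  apply hde
  have h1 := Metric.mem_ball.mp (hm ha)
  have h2 := Metric.mem_ball.mp (hm hbm)
  calc dist a b ≤ dist a x + dist x b := dist_triangle a x b
    _ = dist a x + dist b x := by rw [dist_comm x b]
    _ < δ := by linarith

end Aux3

/-- The Ellis group `G(Φ)` is isomorphic, as a topological group, to the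
inverse limit `Ĝ_∞` of the finite quotients `G ⧸ C_ℓ` by the cores of the group chain. -/
theorem stmt6 {X : Type*} [MetricSpace X] [CompactSpace X] [TotallyDisconnectedSpace X]
    [Nonempty X] (hX : Perfect (Set.univ : Set X))
    {G : Type*} [Group G] [Countable G] (Φ : G → X ≃ₜ X) (hΦ : IsCantorAction Φ)
    (x : X) (U : ℕ → Set X) (hU : IsAdaptedBasis Φ x U) :
    (∀ f ∈ actionClosure Φ, ∀ ℓ : ℕ, ∃ g : G,
        (∀ h : G, ⇑f '' (Φ h '' U ℓ) = Φ (g * h) '' U ℓ) ∧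
        ∀ g' : G, ((∀ h : G, ⇑f '' (Φ h '' U ℓ) = Φ (g' * h) '' U ℓ) ↔
          ((g' : G ⧸ (setStabilizer Φ hΦ.1 (U ℓ)).normalCore) =
            (g : G ⧸ (setStabilizer Φ hΦ.1 (U ℓ)).normalCore)))) ∧
    ∃ Θ : C(X, X) → ∀ ℓ : ℕ, G ⧸ (setStabilizer Φ hΦ.1 (U ℓ)).normalCore,
      (∀ f ∈ actionClosure Φ, ∀ ℓ : ℕ, ∀ g : G,
          (((g : G ⧸ (setStabilizer Φ hΦ.1 (U ℓ)).normalCore) = Θ f ℓ) ↔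
            ∀ h : G, ⇑f '' (Φ h '' U ℓ) = Φ (g * h) '' U ℓ)) ∧
      Set.InjOn Θ (actionClosure Φ) ∧
      Θ '' actionClosure Φ =
        chainLimitSet (fun ℓ => (setStabilizer Φ hΦ.1 (U ℓ)).normalCore) ∧
      (∀ f ∈ actionClosure Φ, ∀ f' ∈ actionClosure Φ,
          f.comp f' ∈ actionClosure Φ ∧ ∀ ℓ : ℕ, Θ (f.comp f') ℓ = Θ f ℓ * Θ f' ℓ) ∧
      @Topology.IsEmbedding {f : C(X, X) // f ∈ actionClosure Φ}
        (∀ ℓ : ℕ, G ⧸ (setStabilizer Φ hΦ.1 (U ℓ)).normalCore) _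
        (@Pi.topologicalSpace ℕ _ fun _ => ⊥) (fun f => Θ f.val) ∧
      ∀ g : G, Θ (Φ g : C(X, X)) =
        fun ℓ => (g : G ⧸ (setStabilizer Φ hΦ.1 (U ℓ)).normalCore) := by
  classical
  have hex : ∀ f : C(X, X), f ∈ actionClosure Φ → ∀ ℓ : ℕ, ∃ g : G, AuxWorks Φ (U ℓ) f g :=
    fun f hf ℓ => aux_exists_works hΦ.1 hΦ.2.1 (hU.2.1 ℓ) hf
  choose θ hθ using hex
  let Θ : C(X, X) → ∀ ℓ : ℕ, G ⧸ (setStabilizer Φ hΦ.1 (U ℓ)).normalCore := fun f ℓ =>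
    if hf : f ∈ actionClosure Φ then
      ((θ f hf ℓ : G) : G ⧸ (setStabilizer Φ hΦ.1 (U ℓ)).normalCore)
    else 1
  have hΘdef : ∀ f (hf : f ∈ actionClosure Φ) (ℓ : ℕ),
      Θ f ℓ = ((θ f hf ℓ : G) : G ⧸ (setStabilizer Φ hΦ.1 (U ℓ)).normalCore) :=
    fun f hf ℓ => dif_pos hf
  have main_iff : ∀ f (hf : f ∈ actionClosure Φ) (ℓ : ℕ) (g : G),
      ((g : G ⧸ (setStabilizer Φ hΦ.1 (U ℓ)).normalCore) = Θ f ℓ) ↔ AuxWorks Φ (U ℓ) f g := by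
    intro f hf ℓ g
    rw [hΘdef f hf ℓ]
    exact ⟨fun h => (aux_works_iff hΦ.1 (hθ f hf ℓ)).mpr h,
      fun h => (aux_works_iff hΦ.1 (hθ f hf ℓ)).mp h⟩
  -- injectivity on the closure
  have hinj : Set.InjOn Θ (actionClosure Φ) := by
    intro f hf f' hf' hT
    ext z
    apply eq_of_forall_dist_le
    intro ε hε
    obtain ⟨m, hm⟩ := aux_small hΦ.2.2 hU ε hε
    obtain ⟨h, hz⟩ := aux_exists_translate hΦ.1 hΦ.2.1 (hU.2.1 m) z
    have hw : AuxWorks Φ (U m) f (θ f hf m) := hθ f hf m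
    have hw' : AuxWorks Φ (U m) f' (θ f hf m) := by
      apply (main_iff f' hf' m _).mp
      rw [← congrFun hT m]
      exact (main_iff f hf m _).mpr hw
    exact le_of_lt (hm _ _ ((hw h) ▸ Set.mem_image_of_mem _ hz) _
      ((hw' h) ▸ Set.mem_image_of_mem _ hz))
  -- the image is the chain limit set
  have hmemchain : ∀ f (hf : f ∈ actionClosure Φ),
      Θ f ∈ chainLimitSet (fun ℓ => (setStabilizer Φ hΦ.1 (U ℓ)).normalCore) := by
    intro f hf ℓ
    refine ⟨θ f hf (ℓ + 1), ?_, (hΘdef f hf (ℓ + 1))⟩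
    exact ((main_iff f hf ℓ _).mpr (aux_works_down hΦ.1 hΦ.2.1 hU hf (hθ f hf (ℓ + 1)))).symm
  have hsurjchain : ∀ σ ∈ chainLimitSet (fun ℓ => (setStabilizer Φ hΦ.1 (U ℓ)).normalCore),
      ∃ f, f ∈ actionClosure Φ ∧ Θ f = σ := by
    intro σ hσ
    set k : ℕ → G := fun ℓ => (σ ℓ).out with hk
    have hkσ : ∀ ℓ, ((k ℓ : G) : G ⧸ (setStabilizer Φ hΦ.1 (U ℓ)).normalCore) = σ ℓ :=
      fun ℓ => QuotientGroup.out_eq' (σ ℓ)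
    have hcompat : ∀ n, ∀ m, m ≤ n →
        ((k n : G) : G ⧸ (setStabilizer Φ hΦ.1 (U m)).normalCore) = σ m := by
      intro n
      induction n with
      | zero =>
        intro m hm
        have : m = 0 := Nat.le_zero.mp hm
        subst this; exact hkσ 0
      | succ n ih =>
        intro m hm
        rcases Nat.lt_or_ge m (n + 1) with hlt | hge
        · have hmn : m ≤ n := Nat.lt_succ_iff.mp hlt
          obtain ⟨g, hg1, hg2⟩ := hσ n
          have e1 : ((k (n + 1) : G) : G ⧸ (setStabilizer Φ hΦ.1 (U (n + 1))).normalCore) =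
              (g : G ⧸ (setStabilizer Φ hΦ.1 (U (n + 1))).normalCore) := by rw [hkσ, hg2]
          have e2 : ((k (n + 1) : G) : G ⧸ (setStabilizer Φ hΦ.1 (U m)).normalCore) =
              (g : G ⧸ (setStabilizer Φ hΦ.1 (U m)).normalCore) :=
            aux_coe_down hΦ.1 hU (Nat.le_succ_of_le hmn) e1
          have e3 : ((g : G) : G ⧸ (setStabilizer Φ hΦ.1 (U n)).normalCore) =
              ((k n : G) : G ⧸ (setStabilizer Φ hΦ.1 (U n)).normalCore) := by rw [hkσ, hg1]
          have e4 : ((g : G) : G ⧸ (setStabilizer Φ hΦ.1 (U m)).normalCore) =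
              ((k n : G) : G ⧸ (setStabilizer Φ hΦ.1 (U m)).normalCore) :=
            aux_coe_down hΦ.1 hU hmn e3
          rw [e2, e4, ih m hmn]
        · have hmeq : m = n + 1 := le_antisymm hm hge
          subst hmeq; exact hkσ _
    have hcauchy : CauchySeq (fun ℓ => (Φ (k ℓ) : C(X, X))) := by
      rw [Metric.cauchySeq_iff]
      intro ε hε
      obtain ⟨N, hN⟩ := aux_small hΦ.2.2 hU ε hε
      refine ⟨N, fun ℓ hℓ ℓ' hℓ' => ?_⟩
      rw [ContinuousMap.dist_lt_iff hε]
      intro z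
      obtain ⟨h, hz⟩ := aux_exists_translate hΦ.1 hΦ.2.1 (hU.2.1 N) z
      have hc : ((k ℓ : G) : G ⧸ (setStabilizer Φ hΦ.1 (U N)).normalCore) =
          ((k ℓ' : G) : G ⧸ (setStabilizer Φ hΦ.1 (U N)).normalCore) := by
        rw [hcompat ℓ N hℓ, hcompat ℓ' N hℓ']
      have hwbase : AuxWorks Φ (U N) (Φ (k ℓ') : C(X, X)) (k ℓ') := by
        intro h'
        rw [aux_coe]
        exact aux_img_comp hΦ.1 _ _ _
      have hw2 : AuxWorks Φ (U N) (Φ (k ℓ') : C(X, X)) (k ℓ) :=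
        (aux_works_iff hΦ.1 hwbase).mpr hc
      have m1 : Φ (k ℓ) z ∈ Φ (k ℓ * h) '' U N := by
        rw [← aux_img_comp hΦ.1]
        exact Set.mem_image_of_mem _ hz
      have m2 : Φ (k ℓ') z ∈ Φ (k ℓ * h) '' U N := by
        rw [← hw2 h, aux_coe]
        exact Set.mem_image_of_mem _ hz
      exact hN _ _ m1 _ m2
    obtain ⟨f, hflim⟩ := cauchySeq_tendsto_of_complete hcauchy
    have hfmem : f ∈ actionClosure Φ :=
      mem_closure_of_tendsto hflim (Filter.Eventually.of_forall fun ℓ => Set.mem_range_self _)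
    refine ⟨f, hfmem, ?_⟩
    funext m
    have hwm : AuxWorks Φ (U m) f (k m) := by
      apply aux_eq_of_subset hΦ.1 hΦ.2.1 (hU.2.1 m) hfmem
      rintro h y ⟨z, hz, rfl⟩
      have hev : ∀ ℓ ≥ m, Φ (k ℓ) z ∈ Φ (k m * h) '' U m := by
        intro ℓ hℓ
        have hc : ((k ℓ : G) : G ⧸ (setStabilizer Φ hΦ.1 (U m)).normalCore) =
            ((k m : G) : G ⧸ (setStabilizer Φ hΦ.1 (U m)).normalCore) := by
          rw [hcompat ℓ m hℓ, hkσ]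
        have hwbase : AuxWorks Φ (U m) (Φ (k ℓ) : C(X, X)) (k ℓ) := by
          intro h'
          rw [aux_coe]
          exact aux_img_comp hΦ.1 _ _ _
        have hw2 : AuxWorks Φ (U m) (Φ (k ℓ) : C(X, X)) (k m) :=
          (aux_works_iff hΦ.1 hwbase).mpr hc.symm
        rw [← hw2 h, aux_coe]
        exact Set.mem_image_of_mem _ hz
      have hclosed : IsClosed (Φ (k m * h) '' U m) :=
        ((((hU.2.1 m).2.1.1).isCompact).image (Φ _).continuous).isClosed
      have htend : Filter.Tendsto (fun ℓ => Φ (k ℓ) z) Filter.atTop (𝓝 (f z)) :=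
        ((continuous_eval_const z).tendsto f).comp hflim
      exact hclosed.mem_of_tendsto htend (Filter.eventually_atTop.mpr ⟨m, hev⟩)
    have hfin := (main_iff f hfmem m (k m)).mpr hwm
    rw [← hfin, hkσ]
  -- composition
  have hcomp : ∀ f ∈ actionClosure Φ, ∀ f' ∈ actionClosure Φ,
      f.comp f' ∈ actionClosure Φ ∧ ∀ ℓ : ℕ, Θ (f.comp f') ℓ = Θ f ℓ * Θ f' ℓ := by
    intro f hf f' hf'
    have hcm : f.comp f' ∈ actionClosure Φ := by
      apply Metric.mem_closure_iff.mpr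
      intro ε hε
      obtain ⟨δ', hδ', hfu⟩ := Metric.uniformContinuous_iff.mp
        (CompactSpace.uniformContinuous_of_continuous f.continuous) (ε / 2) (by linarith)
      obtain ⟨b, hb, hdb⟩ := Metric.mem_closure_iff.mp hf (ε / 2) (by linarith)
      obtain ⟨g, rfl⟩ := hb
      obtain ⟨b', hb', hdb'⟩ := Metric.mem_closure_iff.mp hf' δ' hδ'
      obtain ⟨g', rfl⟩ := hb'
      refine ⟨(Φ (g * g') : C(X, X)), Set.mem_range_self _, ?_⟩
      rw [ContinuousMap.dist_lt_iff hε]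
      intro z
      have e1 : dist (f' z) (Φ g' z) < δ' :=
        lt_of_le_of_lt (ContinuousMap.dist_apply_le_dist (f := f') (g := (Φ g' : C(X, X))) z) hdb'
      have e2 : dist (f (f' z)) (f (Φ g' z)) < ε / 2 := hfu e1
      have e3 : dist (f (Φ g' z)) (Φ g (Φ g' z)) < ε / 2 :=
        lt_of_le_of_lt (ContinuousMap.dist_apply_le_dist (f := f) (g := (Φ g : C(X, X))) (Φ g' z)) hdb
      have e4 : ((Φ (g * g') : C(X, X)) : X → X) z = Φ g (Φ g' z) := hΦ.1.2 g g' z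
      calc dist ((f.comp f') z) ((Φ (g * g') : C(X, X)) z)
          = dist (f (f' z)) (Φ g (Φ g' z)) := by rw [e4]; rfl
        _ ≤ dist (f (f' z)) (f (Φ g' z)) + dist (f (Φ g' z)) (Φ g (Φ g' z)) :=
            dist_triangle _ _ _
        _ < ε := by linarith
    refine ⟨hcm, fun ℓ => ?_⟩
    have hw : AuxWorks Φ (U ℓ) (f.comp f') (θ f hf ℓ * θ f' hf' ℓ) := by
      intro h
      have himg : ⇑(f.comp f') '' (Φ h '' U ℓ) = ⇑f '' (⇑f' '' (Φ h '' U ℓ)) := by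
        rw [ContinuousMap.coe_comp, Set.image_comp]
      rw [himg, hθ f' hf' ℓ h, hθ f hf ℓ (θ f' hf' ℓ * h), mul_assoc]
    have h1 := (main_iff _ hcm ℓ _).mpr hw
    have h2 := (main_iff f hf ℓ (θ f hf ℓ)).mpr (hθ f hf ℓ)
    have h3 := (main_iff f' hf' ℓ (θ f' hf' ℓ)).mpr (hθ f' hf' ℓ)
    rw [← h1, ← h2, ← h3]
    rfl
  refine ⟨?_, Θ, fun f hf ℓ g => main_iff f hf ℓ g, hinj, ?_, hcomp, ?_, ?_⟩
  · -- first statement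
    intro f hf ℓ
    exact ⟨θ f hf ℓ, hθ f hf ℓ, fun g' => aux_works_iff hΦ.1 (hθ f hf ℓ)⟩
  · -- image equality
    apply Set.Subset.antisymm
    · rintro σ ⟨f, hf, rfl⟩
      exact hmemchain f hf
    · intro σ hσ
      obtain ⟨f, hf, hfσ⟩ := hsurjchain σ hσ
      exact ⟨f, hf, hfσ⟩
  · -- embedding
    letI tQ : ∀ ℓ : ℕ, TopologicalSpace (G ⧸ (setStabilizer Φ hΦ.1 (U ℓ)).normalCore) :=
      fun _ => ⊥
    haveI dQ : ∀ ℓ : ℕ, DiscreteTopology (G ⧸ (setStabilizer Φ hΦ.1 (U ℓ)).normalCore) :=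
      fun ℓ => ⟨rfl⟩
    have hcont : Continuous (fun f : {f : C(X, X) // f ∈ actionClosure Φ} => Θ f.val) := by
      apply continuous_pi
      intro ℓ
      rw [continuous_iff_continuousAt]
      intro f
      apply tendsto_nhds_of_eventually_eq
      obtain ⟨δ, hδ, hgap⟩ := aux_gap hΦ.1 hΦ.2.1 (hU.2.1 ℓ)
      filter_upwards [Metric.ball_mem_nhds f hδ] with f' hball
      have hdist : dist f'.val f.val < δ := by
        rw [← Subtype.dist_eq]
        exact Metric.mem_ball.mp hball
      have hw : AuxWorks Φ (U ℓ) f'.val (θ f.val f.2 ℓ) := by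
        apply aux_eq_of_subset hΦ.1 hΦ.2.1 (hU.2.1 ℓ) f'.2
        rintro h y ⟨z, hz, rfl⟩
        apply hgap _ _ (f.val z)
        · rw [← hθ f.val f.2 ℓ h]
          exact Set.mem_image_of_mem _ hz
        · exact lt_of_le_of_lt (ContinuousMap.dist_apply_le_dist z) hdist
      have h1 := (main_iff f'.val f'.2 ℓ _).mpr hw
      rw [← h1]
      exact (main_iff f.val f.2 ℓ _).mpr (hθ f.val f.2 ℓ)
    have hbij : Function.Bijective
        (fun f : {f : C(X, X) // f ∈ actionClosure Φ} =>
          (⟨Θ f.val, hmemchain f.val f.2⟩ :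
            {σ // σ ∈ chainLimitSet (fun ℓ => (setStabilizer Φ hΦ.1 (U ℓ)).normalCore)})) := by
      constructor
      · intro f f' hff'
        exact Subtype.ext (hinj f.2 f'.2 (congrArg Subtype.val hff'))
      · intro σ
        obtain ⟨f, hf, hfσ⟩ := hsurjchain σ.val σ.2
        exact ⟨⟨f, hf⟩, Subtype.ext hfσ⟩
    let e := Equiv.ofBijective _ hbij
    have hconte : Continuous e := hcont.subtype_mk _
    have hconte' : Continuous e.symm := by
      rw [continuous_iff_continuousAt]
      intro σ
      rw [ContinuousAt, Metric.tendsto_nhds]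
      intro ε hε
      obtain ⟨m, hm⟩ := aux_small hΦ.2.2 hU ε hε
      have hopen : IsOpen {σ' : {σ // σ ∈ chainLimitSet
          (fun ℓ => (setStabilizer Φ hΦ.1 (U ℓ)).normalCore)} | σ'.val m = σ.val m} := by
        have hc : Continuous (fun σ' : {σ // σ ∈ chainLimitSet
            (fun ℓ => (setStabilizer Φ hΦ.1 (U ℓ)).normalCore)} => σ'.val m) :=
          (continuous_apply m).comp continuous_subtype_val
        exact hc.isOpen_preimage {σ.val m} (isOpen_discrete _)
      filter_upwards [hopen.mem_nhds rfl] with σ' hσ'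
      have hTf : Θ (e.symm σ).val = σ.val := congrArg Subtype.val (e.apply_symm_apply σ)
      have hTf' : Θ (e.symm σ').val = σ'.val := congrArg Subtype.val (e.apply_symm_apply σ')
      have hkey : Θ (e.symm σ').val m = Θ (e.symm σ).val m := by
        rw [hTf, hTf']
        exact hσ'
      have hwf : AuxWorks Φ (U m) (e.symm σ).val (θ (e.symm σ).val (e.symm σ).2 m) :=
        hθ _ _ m
      have hwf' : AuxWorks Φ (U m) (e.symm σ').val (θ (e.symm σ).val (e.symm σ).2 m) := by
        apply (main_iff (e.symm σ').val (e.symm σ').2 m _).mp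
        rw [hkey]
        exact (main_iff (e.symm σ).val (e.symm σ).2 m _).mpr hwf
      rw [Subtype.dist_eq, ContinuousMap.dist_lt_iff hε]
      intro z
      obtain ⟨h, hz⟩ := aux_exists_translate hΦ.1 hΦ.2.1 (hU.2.1 m) z
      exact hm _ _ ((hwf' h) ▸ Set.mem_image_of_mem _ hz) _
        ((hwf h) ▸ Set.mem_image_of_mem _ hz)
    let homeo : {f : C(X, X) // f ∈ actionClosure Φ} ≃ₜ
        {σ // σ ∈ chainLimitSet (fun ℓ => (setStabilizer Φ hΦ.1 (U ℓ)).normalCore)} :=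
      { toEquiv := e, continuous_toFun := hconte, continuous_invFun := hconte' }
    exact Topology.IsEmbedding.subtypeVal.comp homeo.isEmbedding
  · -- value on the group elements
    intro g
    funext ℓ
    have hmem : (Φ g : C(X, X)) ∈ actionClosure Φ := subset_closure (Set.mem_range_self g)
    have hw : AuxWorks Φ (U ℓ) (Φ g : C(X, X)) g := by
      intro h
      rw [aux_coe]
      exact aux_img_comp hΦ.1 _ _ _
    exact ((main_iff _ hmem ℓ g).mpr hw).symm
end

section
/- Let (X,G,Φ) be a Cantor action and {U_ℓ} an adapted neighborhood basis at x ∈ X, with group chain G_ℓ, cores C_ℓ, inverse limit Ĝ_∞, and the map Θ̂ : G(Φ) → Ĝ_∞ determined by: Θ̂(f)_ℓ is the unique coset gC_ℓ with f(Φ(h)(U_ℓ)) = Φ(gh)(U_ℓ) for all h ∈ G. Then Θ̂ restricts to a bijection from the isotropy group {f ∈ G(Φ) : f(x) = x} onto the discriminant group D_x := {(g_ℓ C_ℓ)_ℓ ∈ Ĝ_∞ : for every ℓ the coset g_ℓ C_ℓ meets G_ℓ, i.e. g_ℓ can be chosen in G_ℓ}. -/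
open Set Topology Filter

section Stmt7Aux

variable {X : Type*} [MetricSpace X] {G : Type*} [Group G] {Φ : G → X ≃ₜ X}
  {x : X} {U : ℕ → Set X}

theorem stmt7_comp (hΦa : IsActionHom Φ) (g h : G) (S : Set X) :
    ⇑(Φ g) '' (⇑(Φ h) '' S) = ⇑(Φ (g * h)) '' S := by
  have hc : ⇑(Φ (g * h)) = ⇑(Φ g) ∘ ⇑(Φ h) := funext fun z => hΦa.2 g h z
  rw [hc, Set.image_comp]

theorem stmt7_one (hΦa : IsActionHom Φ) (S : Set X) : ⇑(Φ (1 : G)) '' S = S := by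
  have h : ⇑(Φ (1 : G)) = id := funext hΦa.1
  rw [h, Set.image_id]

theorem stmt7_mem_stab (hΦa : IsActionHom Φ) {V : Set X} {g : G} :
    g ∈ setStabilizer Φ hΦa V ↔ ⇑(Φ g) '' V = V := Iff.rfl

theorem stmt7_meet (hΦa : IsActionHom Φ) {V : Set X} (hV : IsAdapted Φ V) {a b : G}
    (hab : (⇑(Φ a) '' V ∩ ⇑(Φ b) '' V).Nonempty) :
    a⁻¹ * b ∈ setStabilizer Φ hΦa V := by
  obtain ⟨z, hza, hzb⟩ := hab
  have h1 : Φ a⁻¹ z ∈ ⇑(Φ (a⁻¹ * a)) '' V := by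
    rw [← stmt7_comp hΦa]
    exact Set.mem_image_of_mem _ hza
  have h2 : Φ a⁻¹ z ∈ ⇑(Φ (a⁻¹ * b)) '' V := by
    rw [← stmt7_comp hΦa]
    exact Set.mem_image_of_mem _ hzb
  rw [inv_mul_cancel, stmt7_one hΦa] at h1
  exact (stmt7_mem_stab hΦa).mpr (hV.2.2 (a⁻¹ * b) ⟨Φ a⁻¹ z, h2, h1⟩)

theorem stmt7_anti (hU : IsAdaptedBasis Φ x U) : Antitone U :=
  antitone_nat_of_succ_le fun n => (hU.2.2.2.1 n).subset

theorem stmt7_stab_mono (hΦa : IsActionHom Φ) (hU : IsAdaptedBasis Φ x U)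
    {ℓ m : ℕ} (h : ℓ ≤ m) :
    setStabilizer Φ hΦa (U m) ≤ setStabilizer Φ hΦa (U ℓ) := by
  intro g hg
  have hgm : ⇑(Φ g) '' U m = U m := (stmt7_mem_stab hΦa).mp hg
  obtain ⟨z, hz⟩ := (hU.2.1 m).1
  have h1 : Φ g z ∈ U m := by rw [← hgm]; exact Set.mem_image_of_mem _ hz
  have hne : (⇑(Φ g) '' U ℓ ∩ U ℓ).Nonempty :=
    ⟨Φ g z, Set.mem_image_of_mem _ (stmt7_anti hU h hz), stmt7_anti hU h h1⟩
  exact (stmt7_mem_stab hΦa).mpr ((hU.2.1 ℓ).2.2 g hne)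

theorem stmt7_shrink [CompactSpace X] (hU : IsAdaptedBasis Φ x U) {ε : ℝ} (hε : 0 < ε) :
    ∃ ℓ : ℕ, U ℓ ⊆ Metric.ball x ε := by
  by_contra hcon
  push_neg at hcon
  have hne : ∀ ℓ : ℕ, (U ℓ \ Metric.ball x ε).Nonempty := by
    intro ℓ
    obtain ⟨z, hz1, hz2⟩ := Set.not_subset.mp (hcon ℓ)
    exact ⟨z, hz1, hz2⟩
  have hcl : ∀ ℓ : ℕ, IsClosed (U ℓ \ Metric.ball x ε) := fun ℓ =>
    ((hU.2.1 ℓ).2.1.1).sdiff Metric.isOpen_ball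
  have hdir : Directed (· ⊇ ·) (fun ℓ => U ℓ \ Metric.ball x ε) := fun i j =>
    ⟨max i j, Set.diff_subset_diff_left (stmt7_anti hU (le_max_left i j)),
      Set.diff_subset_diff_left (stmt7_anti hU (le_max_right i j))⟩
  obtain ⟨z, hz⟩ := IsCompact.nonempty_iInter_of_directed_nonempty_isCompact_isClosed
    _ hdir hne (fun ℓ => (hcl ℓ).isCompact) hcl
  have hz1 : z ∈ ⋂ ℓ, U ℓ := Set.mem_iInter.mpr fun ℓ => (Set.mem_iInter.mp hz ℓ).1
  rw [hU.2.2.2.2, Set.mem_singleton_iff] at hz1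
  have hz2 := (Set.mem_iInter.mp hz 0).2
  rw [hz1] at hz2
  exact hz2 (Metric.mem_ball_self hε)

theorem stmt7_cover (hΦa : IsActionHom Φ) (hmin : IsMinimalAction Φ) {V : Set X}
    (hV : IsAdapted Φ V) (z : X) : ∃ h : G, z ∈ ⇑(Φ h) '' V := by
  obtain ⟨w, ⟨g, rfl⟩, hwV⟩ := (hmin z).exists_mem_open hV.2.1.2 hV.1
  refine ⟨g⁻¹, Φ g z, hwV, ?_⟩
  have hcomp := hΦa.2 g⁻¹ g z
  rw [inv_mul_cancel] at hcomp
  rw [← hcomp]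
  exact hΦa.1 z

end Stmt7Aux

/-- The isomorphism `Θ̂` maps the isotropy group of `x` in the Ellis group
bijectively onto the discriminant group `D_x`. -/
theorem stmt7 {X : Type*} [MetricSpace X] [CompactSpace X] [TotallyDisconnectedSpace X]
    [Nonempty X] (hX : Perfect (Set.univ : Set X))
    {G : Type*} [Group G] [Countable G] (Φ : G → X ≃ₜ X) (hΦ : IsCantorAction Φ)
    (x : X) (U : ℕ → Set X) (hU : IsAdaptedBasis Φ x U)
    (Θ : C(X, X) → ∀ ℓ : ℕ, G ⧸ (setStabilizer Φ hΦ.1 (U ℓ)).normalCore)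
    (hΘ : ∀ f ∈ actionClosure Φ, ∀ ℓ : ℕ, ∀ g : G,
        (((g : G ⧸ (setStabilizer Φ hΦ.1 (U ℓ)).normalCore) = Θ f ℓ) ↔
          ∀ h : G, ⇑f '' (Φ h '' U ℓ) = Φ (g * h) '' U ℓ)) :
    Set.InjOn Θ {f ∈ actionClosure Φ | f x = x} ∧
    Θ '' {f ∈ actionClosure Φ | f x = x} =
      {σ ∈ chainLimitSet (fun ℓ => (setStabilizer Φ hΦ.1 (U ℓ)).normalCore) |
        ∀ ℓ : ℕ, ∃ g ∈ setStabilizer Φ hΦ.1 (U ℓ),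
          σ ℓ = (g : G ⧸ (setStabilizer Φ hΦ.1 (U ℓ)).normalCore)} := by
  have hΦa : IsActionHom Φ := hΦ.1
  have hmin : IsMinimalAction Φ := hΦ.2.1
  have hequi : IsEquicontinuousAction Φ := hΦ.2.2
  have hAd : ∀ ℓ : ℕ, IsAdapted Φ (U ℓ) := hU.2.1
  have hxU : ∀ ℓ : ℕ, x ∈ U ℓ := hU.2.2.1
  have hUne : ∀ ℓ : ℕ, (U ℓ).Nonempty := fun ℓ => (hAd ℓ).1
  have hUcl : ∀ ℓ : ℕ, IsClopen (U ℓ) := fun ℓ => (hAd ℓ).2.1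
  -- representatives of `Θ f ℓ`
  have hrep : ∀ f ∈ actionClosure Φ, ∀ ℓ : ℕ, ∃ g : G,
      ((g : G ⧸ (setStabilizer Φ hΦ.1 (U ℓ)).normalCore) = Θ f ℓ) ∧
      ∀ h : G, ⇑f '' (⇑(Φ h) '' U ℓ) = ⇑(Φ (g * h)) '' U ℓ := by
    intro f hf ℓ
    obtain ⟨g, hg⟩ := QuotientGroup.mk_surjective (Θ f ℓ)
    exact ⟨g, hg, (hΘ f hf ℓ g).mp hg⟩
  -- `Θ f` lies in the inverse limit
  have hlim : ∀ f ∈ actionClosure Φ,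
      Θ f ∈ chainLimitSet (fun ℓ => (setStabilizer Φ hΦ.1 (U ℓ)).normalCore) := by
    intro f hf ℓ
    obtain ⟨g, hg, hprop⟩ := hrep f hf (ℓ + 1)
    obtain ⟨g', hg', hprop'⟩ := hrep f hf ℓ
    refine ⟨g, ?_, hg.symm⟩
    rw [← hg']
    rw [QuotientGroup.eq]
    have key : ∀ b : G, b * (g'⁻¹ * g) * b⁻¹ ∈ setStabilizer Φ hΦ.1 (U ℓ) := by
      intro b
      have h1 := hprop b⁻¹
      have h2 := hprop' b⁻¹
      have hsub : ⇑(Φ (g * b⁻¹)) '' U (ℓ + 1) ⊆ ⇑(Φ (g' * b⁻¹)) '' U ℓ := by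
        rw [← h1, ← h2]
        exact Set.image_mono (Set.image_mono (hU.2.2.2.1 ℓ).subset)
      have hne : (⇑(Φ (g' * b⁻¹)) '' U ℓ ∩ ⇑(Φ (g * b⁻¹)) '' U ℓ).Nonempty := by
        obtain ⟨z, hz⟩ := hUne (ℓ + 1)
        exact ⟨Φ (g * b⁻¹) z, hsub (Set.mem_image_of_mem _ hz),
          Set.mem_image_of_mem _ (stmt7_anti hU (Nat.le_succ ℓ) hz)⟩
      have hmem := stmt7_meet hΦ.1 (hAd ℓ) hne
      have heq : (g' * b⁻¹)⁻¹ * (g * b⁻¹) = b * (g'⁻¹ * g) * b⁻¹ := by group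
      rwa [heq] at hmem
    exact key
  -- `Θ f` lies in the discriminant when `f x = x`
  have hdisc : ∀ f ∈ actionClosure Φ, f x = x → ∀ ℓ : ℕ,
      ∃ g ∈ setStabilizer Φ hΦ.1 (U ℓ),
        Θ f ℓ = (g : G ⧸ (setStabilizer Φ hΦ.1 (U ℓ)).normalCore) := by
    intro f hf hfx ℓ
    obtain ⟨g, hg, hprop⟩ := hrep f hf ℓ
    have h1 := hprop 1
    rw [stmt7_one hΦ.1, mul_one] at h1
    have hxmem : x ∈ ⇑(Φ g) '' U ℓ := by
      rw [← h1]
      exact ⟨x, hxU ℓ, hfx⟩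
    exact ⟨g, (stmt7_mem_stab hΦ.1).mpr ((hAd ℓ).2.2 g ⟨x, hxmem, hxU ℓ⟩), hg.symm⟩
  have hinj : Set.InjOn Θ {f ∈ actionClosure Φ | f x = x} := by
    intro f₁ hf₁ f₂ hf₂ hTe
    obtain ⟨hf₁c, hf₁x⟩ := hf₁
    obtain ⟨hf₂c, hf₂x⟩ := hf₂
    refine ContinuousMap.ext fun z => eq_of_forall_dist_le fun ε hε => ?_
    obtain ⟨δ, hδ, hδprop⟩ := hequi ε hε
    obtain ⟨ℓ, hℓ⟩ := stmt7_shrink hU (show (0 : ℝ) < δ / 2 by positivity)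
    obtain ⟨h, hzmem⟩ := stmt7_cover hΦ.1 hmin (hAd ℓ) z
    obtain ⟨g, hg, hprop₁⟩ := hrep f₁ hf₁c ℓ
    have hprop₂ : ∀ k : G, ⇑f₂ '' (⇑(Φ k) '' U ℓ) = ⇑(Φ (g * k)) '' U ℓ := by
      refine (hΘ f₂ hf₂c ℓ g).mp ?_
      rw [← hTe]
      exact hg
    have hm₁ : f₁ z ∈ ⇑(Φ (g * h)) '' U ℓ := by
      rw [← hprop₁ h]
      exact Set.mem_image_of_mem _ hzmem
    have hm₂ : f₂ z ∈ ⇑(Φ (g * h)) '' U ℓ := by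
      rw [← hprop₂ h]
      exact Set.mem_image_of_mem _ hzmem
    obtain ⟨u₁, hu₁, e₁⟩ := hm₁
    obtain ⟨u₂, hu₂, e₂⟩ := hm₂
    have hd : dist u₁ u₂ < δ := by
      have d1 := Metric.mem_ball.mp (hℓ hu₁)
      have d2 := Metric.mem_ball.mp (hℓ hu₂)
      calc dist u₁ u₂ ≤ dist u₁ x + dist u₂ x := dist_triangle_right _ _ _
        _ < δ / 2 + δ / 2 := add_lt_add d1 d2
        _ = δ := by ring
    rw [← e₁, ← e₂]
    exact (hδprop (g * h) u₁ u₂ hd).le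
  refine ⟨hinj, Set.Subset.antisymm ?_ ?_⟩
  · rintro σ ⟨f, ⟨hfc, hfx⟩, rfl⟩
    exact ⟨hlim f hfc, hdisc f hfc hfx⟩
  · rintro σ ⟨hσlim, hσD⟩
    choose g hgstab hgσ using hσD
    have hCmono : ∀ {ℓ m : ℕ}, ℓ ≤ m →
        (setStabilizer Φ hΦ.1 (U m)).normalCore ≤ (setStabilizer Φ hΦ.1 (U ℓ)).normalCore :=
      fun h => Subgroup.normalCore_mono (stmt7_stab_mono hΦ.1 hU h)
    have hcons : ∀ ℓ : ℕ,
        (g ℓ)⁻¹ * g (ℓ + 1) ∈ (setStabilizer Φ hΦ.1 (U ℓ)).normalCore := by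
      intro ℓ
      obtain ⟨k, hk1, hk2⟩ := hσlim ℓ
      have e1 : (g ℓ)⁻¹ * k ∈ (setStabilizer Φ hΦ.1 (U ℓ)).normalCore :=
        QuotientGroup.eq.mp ((hgσ ℓ).symm.trans hk1)
      have e2 : (g (ℓ + 1))⁻¹ * k ∈ (setStabilizer Φ hΦ.1 (U (ℓ + 1))).normalCore :=
        QuotientGroup.eq.mp ((hgσ (ℓ + 1)).symm.trans hk2)
      have e3 := hCmono (Nat.le_succ ℓ) e2
      have e4 := Subgroup.mul_mem _ e1 (Subgroup.inv_mem _ e3)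
      have heq : (g ℓ)⁻¹ * k * ((g (ℓ + 1))⁻¹ * k)⁻¹ = (g ℓ)⁻¹ * g (ℓ + 1) := by group
      rwa [heq] at e4
    have hgen : ∀ ℓ m : ℕ, ℓ ≤ m →
        (g ℓ)⁻¹ * g m ∈ (setStabilizer Φ hΦ.1 (U ℓ)).normalCore := by
      intro ℓ m hlm
      induction m, hlm using Nat.le_induction with
      | base =>
        rw [inv_mul_cancel]
        exact Subgroup.one_mem _
      | succ m hm ih =>
        have h2 := hCmono hm (hcons m)
        have h3 := Subgroup.mul_mem _ ih h2
        have heq : (g ℓ)⁻¹ * g m * ((g m)⁻¹ * g (m + 1)) = (g ℓ)⁻¹ * g (m + 1) := by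
          group
        rwa [heq] at h3
    have hkey : ∀ ℓ m : ℕ, ℓ ≤ m → ∀ h : G,
        ⇑(Φ (g m * h)) '' U ℓ = ⇑(Φ (g ℓ * h)) '' U ℓ := by
      intro ℓ m hlm h
      have hc : h⁻¹ * ((g ℓ)⁻¹ * g m) * h ∈ (setStabilizer Φ hΦ.1 (U ℓ)).normalCore := by
        have hconj := Subgroup.Normal.conj_mem (Subgroup.normalCore_normal _) _
          (hgen ℓ m hlm) h⁻¹
        simpa using hconj
      have hcs : ⇑(Φ (h⁻¹ * ((g ℓ)⁻¹ * g m) * h)) '' U ℓ = U ℓ :=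
        (stmt7_mem_stab hΦ.1).mp (Subgroup.normalCore_le _ hc)
      have hrw : ⇑(Φ (g m * h)) '' U ℓ =
          ⇑(Φ ((g ℓ * h) * (h⁻¹ * ((g ℓ)⁻¹ * g m) * h))) '' U ℓ := by
        have heq : (g ℓ * h) * (h⁻¹ * ((g ℓ)⁻¹ * g m) * h) = g m * h := by group
        rw [heq]
      rw [hrw, ← stmt7_comp hΦ.1, hcs]
    set F : ℕ → C(X, X) := fun m => (Φ (g m) : C(X, X)) with hF
    have hFapp : ∀ (m : ℕ) (z : X), F m z = Φ (g m) z := fun m z => rfl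
    have hcauchy : CauchySeq F := by
      rw [Metric.cauchySeq_iff']
      intro ε hε
      obtain ⟨δ, hδ, hδprop⟩ := hequi (ε / 2) (by positivity)
      obtain ⟨ℓ, hℓ⟩ := stmt7_shrink hU (show (0 : ℝ) < δ / 2 by positivity)
      refine ⟨ℓ, fun n hn => ?_⟩
      have hle : dist (F n) (F ℓ) ≤ ε / 2 := by
        rw [ContinuousMap.dist_le (by positivity)]
        intro z
        obtain ⟨h, hzmem⟩ := stmt7_cover hΦ.1 hmin (hAd ℓ) z
        obtain ⟨u, hu, rfl⟩ := hzmem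
        have hn1 : Φ (g n) (Φ h u) ∈ ⇑(Φ (g ℓ * h)) '' U ℓ := by
          rw [← hkey ℓ n hn h]
          exact ⟨u, hu, hΦ.1.2 (g n) h u⟩
        have hn2 : Φ (g ℓ) (Φ h u) ∈ ⇑(Φ (g ℓ * h)) '' U ℓ :=
          ⟨u, hu, hΦ.1.2 (g ℓ) h u⟩
        obtain ⟨u₁, hu₁, e₁⟩ := hn1
        obtain ⟨u₂, hu₂, e₂⟩ := hn2
        have hd : dist u₁ u₂ < δ := by
          have d1 := Metric.mem_ball.mp (hℓ hu₁)
          have d2 := Metric.mem_ball.mp (hℓ hu₂)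
          calc dist u₁ u₂ ≤ dist u₁ x + dist u₂ x := dist_triangle_right _ _ _
            _ < δ / 2 + δ / 2 := add_lt_add d1 d2
            _ = δ := by ring
        have hlt : dist (Φ (g ℓ * h) u₁) (Φ (g ℓ * h) u₂) < ε / 2 :=
          hδprop (g ℓ * h) u₁ u₂ hd
        have eq1 : F n (Φ h u) = Φ (g ℓ * h) u₁ := (hFapp n (Φ h u)).trans e₁.symm
        have eq2 : F ℓ (Φ h u) = Φ (g ℓ * h) u₂ := (hFapp ℓ (Φ h u)).trans e₂.symm
        rw [eq1, eq2]
        exact hlt.le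
      linarith
    obtain ⟨f, hfT⟩ := cauchySeq_tendsto_of_complete hcauchy
    have hfc : f ∈ actionClosure Φ :=
      mem_closure_of_tendsto hfT (Filter.Eventually.of_forall fun m => ⟨g m, rfl⟩)
    have hpt : ∀ z : X, Filter.Tendsto (fun m => Φ (g m) z) Filter.atTop (nhds (f z)) := by
      intro z
      have hc : Continuous fun q : C(X, X) => q z := continuous_eval_const z
      exact (hc.tendsto f).comp hfT
    have hfx : f x = x := by
      refine tendsto_nhds_unique (hpt x) ?_
      rw [Metric.tendsto_atTop]
      intro ε hε
      obtain ⟨ℓ, hℓ⟩ := stmt7_shrink hU hε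
      refine ⟨ℓ, fun n hn => ?_⟩
      have h1 : Φ (g n) x ∈ U n := by
        have himg := (stmt7_mem_stab hΦ.1).mp (hgstab n)
        rw [← himg]
        exact Set.mem_image_of_mem _ (hxU n)
      exact Metric.mem_ball.mp (hℓ (stmt7_anti hU hn h1))
    refine ⟨f, ⟨hfc, hfx⟩, ?_⟩
    funext ℓ
    have hgoal : ((g ℓ : G) : G ⧸ (setStabilizer Φ hΦ.1 (U ℓ)).normalCore) = Θ f ℓ := by
      rw [hΘ f hfc ℓ (g ℓ)]
      intro h
      apply Set.Subset.antisymm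
      · rintro _ ⟨z, hz, rfl⟩
        obtain ⟨u, hu, rfl⟩ := hz
        have hWclosed : IsClosed (⇑(Φ (g ℓ * h)) '' U ℓ) :=
          (Φ (g ℓ * h)).isClosedMap _ (hUcl ℓ).1
        refine hWclosed.mem_of_tendsto (hpt (Φ h u)) ?_
        filter_upwards [Filter.eventually_ge_atTop ℓ] with m hm
        rw [← hkey ℓ m hm h]
        exact ⟨u, hu, hΦ.1.2 (g m) h u⟩
      · intro w hw
        by_contra hnot
        have hVcomp : IsCompact (⇑(Φ h) '' U ℓ) :=
          ((hUcl ℓ).1.isCompact).image (Φ h).continuous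
        have hKcomp : IsCompact (⇑f '' (⇑(Φ h) '' U ℓ)) := hVcomp.image f.continuous
        have hKne : (⇑f '' (⇑(Φ h) '' U ℓ)).Nonempty := ((hUne ℓ).image _).image _
        have hdpos : 0 < Metric.infDist w (⇑f '' (⇑(Φ h) '' U ℓ)) :=
          (hKcomp.isClosed.notMem_iff_infDist_pos hKne).mp hnot
        obtain ⟨N, hN⟩ := (Metric.tendsto_atTop.mp hfT) _ hdpos
        have hm1 : N ≤ max N ℓ := le_max_left _ _
        have hm2 : ℓ ≤ max N ℓ := le_max_right _ _
        have hwW : w ∈ ⇑(Φ (g (max N ℓ) * h)) '' U ℓ := by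
          rw [hkey ℓ (max N ℓ) hm2 h]
          exact hw
        obtain ⟨u, hu, rfl⟩ := hwW
        have hfu : f (Φ h u) ∈ ⇑f '' (⇑(Φ h) '' U ℓ) :=
          Set.mem_image_of_mem _ (Set.mem_image_of_mem _ hu)
        have hle := Metric.infDist_le_dist_of_mem (x := Φ (g (max N ℓ) * h) u) hfu
        have hdd : dist (Φ (g (max N ℓ) * h) u) (f (Φ h u)) ≤ dist (F (max N ℓ)) f := by
          have happ : Φ (g (max N ℓ) * h) u = F (max N ℓ) (Φ h u) :=
            hΦ.1.2 (g (max N ℓ)) h u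
          rw [happ]
          exact ContinuousMap.dist_apply_le_dist _
        have hNlt := hN (max N ℓ) hm1
        linarith
    rw [hgσ ℓ, ← hgoal]
end

section
/- Let G be a countable group and let {G_ℓ} and {H_ℓ} be group chains in G with G_0 = H_0 = G, with associated inverse limit G-spaces X_∞ = lim← G/G_ℓ and Y_∞ = lim← G/H_ℓ. Then: (a) the chains {G_ℓ} and {H_ℓ} are equivalent if and only if there exists a G-equivariant homeomorphism τ : X_∞ → Y_∞ with τ((eG_ℓ)_ℓ) = (eH_ℓ)_ℓ; and (b) the chains {G_ℓ} and {H_ℓ} are conjugate equivalent if and only if there exists a G-equivariant homeomorphism τ : X_∞ → Y_∞. -/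
open Set Topology Filter

section Stmt8Aux

variable {G : Type*} [Group G]

theorem chainDesc_le {C : ℕ → Subgroup G} (hC : ∀ ℓ, C (ℓ+1) ≤ C ℓ) {i m : ℕ} (h : i ≤ m) :
    C m ≤ C i := antitone_nat_of_succ_le hC h

theorem chain_coherent {C : ℕ → Subgroup G} (hC : ∀ ℓ, C (ℓ+1) ≤ C ℓ)
    {σ : ∀ ℓ : ℕ, G ⧸ C ℓ} (hσ : σ ∈ chainLimitSet C) {i m : ℕ} (him : i ≤ m) :
    ∀ g : G, σ m = (g : G ⧸ C m) → σ i = (g : G ⧸ C i) := by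
  induction m, him using Nat.le_induction with
  | base => exact fun g hg => hg
  | succ n hin ih =>
    intro g hg
    obtain ⟨k, h1, h2⟩ := hσ n
    have hk : k⁻¹ * g ∈ C (n+1) := QuotientGroup.eq.mp (h2 ▸ hg)
    have hik : σ i = (k : G ⧸ C i) := ih k h1
    rw [hik]
    exact QuotientGroup.eq.mpr (chainDesc_le hC (Nat.le_succ_of_le hin) hk)

def pushQ {H K : Subgroup G} (h : H ≤ K) : G ⧸ H → G ⧸ K :=
  Quotient.map' id fun _ _ hab =>
    QuotientGroup.leftRel_apply.mpr (h (QuotientGroup.leftRel_apply.mp hab))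

theorem pushQ_mk {H K : Subgroup G} (h : H ≤ K) (g : G) : pushQ h (g : G ⧸ H) = (g : G ⧸ K) := rfl

theorem pushQ_smul {H K : Subgroup G} (h : H ≤ K) (g : G) (x : G ⧸ H) :
    pushQ h (g • x) = g • pushQ h x := by
  induction x using Quotient.inductionOn' with
  | h a => rfl

/-- Tendsto in the chain limit topology is coordinatewise eventual equality. -/
theorem tendsto_chainLimit_iff {C : ℕ → Subgroup G} (x : ℕ → chainLimitSet C)
    (a : chainLimitSet C) :
    Filter.Tendsto x Filter.atTop (@nhds _ (chainLimitTop C) a) ↔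
      ∀ i : ℕ, ∀ᶠ n in Filter.atTop, (x n).1 i = a.1 i := by
  letI : ∀ ℓ : ℕ, TopologicalSpace (G ⧸ C ℓ) := fun _ => ⊥
  rw [show chainLimitTop C =
      TopologicalSpace.induced (Subtype.val) Pi.topologicalSpace from rfl]
  rw [nhds_induced, Filter.tendsto_comap_iff, tendsto_pi_nhds]
  refine forall_congr' fun i => ?_
  haveI : DiscreteTopology (G ⧸ C i) := ⟨rfl⟩
  rw [show (𝓝 ((a : ∀ ℓ : ℕ, G ⧸ C ℓ) i)) = pure (a.1 i) from congrFun (nhds_discrete _) _]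
  rw [Filter.tendsto_pure]
  rfl

/-- Continuity of coordinatewise-defined maps between chain limits. -/
theorem continuous_chainLimit_of_coord {C D : ℕ → Subgroup G}
    (f : chainLimitSet C → chainLimitSet D) (m : ℕ → ℕ)
    (φ : ∀ i : ℕ, G ⧸ C (m i) → G ⧸ D i)
    (hf : ∀ σ i, (f σ).1 i = φ i (σ.1 (m i))) :
    @Continuous _ _ (chainLimitTop C) (chainLimitTop D) f := by
  letI : ∀ ℓ : ℕ, TopologicalSpace (G ⧸ C ℓ) := fun _ => ⊥
  letI : ∀ ℓ : ℕ, TopologicalSpace (G ⧸ D ℓ) := fun _ => ⊥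
  rw [show chainLimitTop D =
      TopologicalSpace.induced (Subtype.val) Pi.topologicalSpace from rfl]
  rw [continuous_induced_rng]
  apply continuous_pi
  intro i
  have h1 : @Continuous _ _ (chainLimitTop C) _ (fun σ : chainLimitSet C => σ.1 (m i)) :=
    (continuous_apply (m i)).comp continuous_induced_dom
  have h2 : (fun σ : chainLimitSet C => (Subtype.val (f σ)) i)
      = fun σ => φ i (σ.1 (m i)) := funext fun σ => hf σ i
  show @Continuous _ _ (chainLimitTop C) _ (fun σ : chainLimitSet C => (Subtype.val (f σ)) i)
  rw [h2]
  exact continuous_bot.comp h1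

section ChainMapSec

variable {C D : ℕ → Subgroup G} (hC : ∀ ℓ, C (ℓ+1) ≤ C ℓ)
  {F : ℕ → ℕ} (hFm : Monotone F) (hF : ∀ ℓ, C (F ℓ) ≤ D ℓ)

include hC hFm hF in
theorem chainMap_mem {σ : ∀ ℓ : ℕ, G ⧸ C ℓ} (hσ : σ ∈ chainLimitSet C) :
    (fun ℓ => pushQ (hF ℓ) (σ (F ℓ))) ∈ chainLimitSet D := by
  intro ℓ
  obtain ⟨g, hg⟩ := QuotientGroup.mk_surjective (σ (F (ℓ+1)))
  have h1 : σ (F (ℓ+1)) = (g : G ⧸ C (F (ℓ+1))) := hg.symm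
  have h0 : σ (F ℓ) = (g : G ⧸ C (F ℓ)) :=
    chain_coherent hC hσ (hFm (Nat.le_succ ℓ)) g h1
  refine ⟨g, ?_, ?_⟩
  · show pushQ (hF ℓ) (σ (F ℓ)) = _
    rw [h0]; rfl
  · show pushQ (hF (ℓ+1)) (σ (F (ℓ+1))) = _
    rw [h1]; rfl

def chainMap (σ : chainLimitSet C) : chainLimitSet D :=
  ⟨fun ℓ => pushQ (hF ℓ) (σ.1 (F ℓ)), chainMap_mem hC hFm hF σ.2⟩

theorem chainMap_coord (σ : chainLimitSet C) (ℓ : ℕ) {g : G}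
    (hg : σ.1 (F ℓ) = (g : G ⧸ C (F ℓ))) :
    (chainMap hC hFm hF σ).1 ℓ = (g : G ⧸ D ℓ) := by
  show pushQ (hF ℓ) (σ.1 (F ℓ)) = _
  rw [hg]; rfl

theorem chainMap_base : chainMap hC hFm hF (chainBasepoint C) = chainBasepoint D :=
  Subtype.ext (funext fun ℓ => rfl)

theorem chainMap_equivariant (g : G) (σ : chainLimitSet C) :
    chainMap hC hFm hF ⟨fun ℓ => g • σ.1 ℓ, smul_mem_chainLimitSet g σ.2⟩ =
      ⟨fun ℓ => g • (chainMap hC hFm hF σ).1 ℓ,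
        smul_mem_chainLimitSet g (chainMap hC hFm hF σ).2⟩ :=
  Subtype.ext (funext fun ℓ => pushQ_smul (hF ℓ) g (σ.1 (F ℓ)))

theorem chainMap_continuous :
    @Continuous _ _ (chainLimitTop C) (chainLimitTop D) (chainMap hC hFm hF) :=
  continuous_chainLimit_of_coord _ F (fun i => pushQ (hF i)) (fun _ _ => rfl)

end ChainMapSec

theorem chainMap_comp_self {C D : ℕ → Subgroup G}
    (hC : ∀ ℓ, C (ℓ+1) ≤ C ℓ) (hD : ∀ ℓ, D (ℓ+1) ≤ D ℓ)
    {F F' : ℕ → ℕ} (hFm : Monotone F) (hF : ∀ ℓ, C (F ℓ) ≤ D ℓ)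
    (hF'm : Monotone F') (hF' : ∀ ℓ, D (F' ℓ) ≤ C ℓ)
    (hup : ∀ ℓ, ℓ ≤ F (F' ℓ)) (σ : chainLimitSet C) :
    chainMap hD hF'm hF' (chainMap hC hFm hF σ) = σ := by
  apply Subtype.ext
  funext ℓ
  obtain ⟨g, hg⟩ := QuotientGroup.mk_surjective (σ.1 (F (F' ℓ)))
  have h1 : (chainMap hC hFm hF σ).1 (F' ℓ) = (g : G ⧸ D (F' ℓ)) :=
    chainMap_coord hC hFm hF σ (F' ℓ) hg.symm
  have h2 : (chainMap hD hF'm hF' (chainMap hC hFm hF σ)).1 ℓ = (g : G ⧸ C ℓ) :=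
    chainMap_coord hD hF'm hF' _ ℓ h1
  rw [h2]
  exact (chain_coherent hC σ.2 (hup ℓ) g hg.symm).symm

theorem forwardPair {Gc Hc : ℕ → Subgroup G} (hGd : ∀ ℓ, Gc (ℓ+1) ≤ Gc ℓ)
    (hHd : ∀ ℓ, Hc (ℓ+1) ≤ Hc ℓ) (h : ChainsEquivalent Gc Hc) :
    ∃ τ : chainLimitSet Gc ≃ chainLimitSet Hc,
      @Continuous _ _ (chainLimitTop Gc) (chainLimitTop Hc) τ ∧
      @Continuous _ _ (chainLimitTop Hc) (chainLimitTop Gc) τ.symm ∧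
      (∀ (g : G) (σ : chainLimitSet Gc),
        τ ⟨fun ℓ => g • (σ : ∀ ℓ : ℕ, G ⧸ Gc ℓ) ℓ, smul_mem_chainLimitSet g σ.2⟩ =
          ⟨fun ℓ => g • ((τ σ : ∀ ℓ : ℕ, G ⧸ Hc ℓ)) ℓ,
            smul_mem_chainLimitSet g (τ σ).2⟩) ∧
      τ (chainBasepoint Gc) = chainBasepoint Hc := by
  obtain ⟨K, hK, ls, js, hls, hjs, hkey⟩ := h
  have hFm : Monotone (fun ℓ => ls (ℓ+1)) := fun a b hab => hls.monotone (Nat.succ_le_succ hab)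
  have hF'm : Monotone js := hjs.monotone
  have hF : ∀ ℓ, Gc (ls (ℓ+1)) ≤ Hc ℓ := by
    intro ℓ
    calc Gc (ls (ℓ+1)) = K (2*ℓ+1+1) := by
          rw [show 2*ℓ+1+1 = 2*(ℓ+1) by ring, (hkey (ℓ+1)).1]
      _ ≤ K (2*ℓ+1) := (hK.2 (2*ℓ+1)).1
      _ = Hc (js ℓ) := (hkey ℓ).2
      _ ≤ Hc ℓ := chainDesc_le hHd hjs.le_apply
  have hF' : ∀ ℓ, Hc (js ℓ) ≤ Gc ℓ := by
    intro ℓ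
    calc Hc (js ℓ) = K (2*ℓ+1) := ((hkey ℓ).2).symm
      _ ≤ K (2*ℓ) := (hK.2 (2*ℓ)).1
      _ = Gc (ls ℓ) := (hkey ℓ).1
      _ ≤ Gc ℓ := chainDesc_le hGd hls.le_apply
  have hup1 : ∀ ℓ, ℓ ≤ ls (js ℓ + 1) :=
    fun ℓ => le_trans (le_trans hjs.le_apply (Nat.le_succ _)) hls.le_apply
  have hup2 : ∀ ℓ, ℓ ≤ js (ls (ℓ+1)) :=
    fun ℓ => le_trans (le_trans (Nat.le_succ ℓ) hls.le_apply) hjs.le_apply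
  refine ⟨Equiv.mk (chainMap hGd hFm hF) (chainMap hHd hF'm hF')
      (fun σ => chainMap_comp_self hGd hHd hFm hF hF'm hF' hup1 σ)
      (fun σ' => chainMap_comp_self hHd hGd hF'm hF' hFm hF hup2 σ'), ?_, ?_, ?_, ?_⟩
  · exact chainMap_continuous hGd hFm hF
  · exact chainMap_continuous hHd hF'm hF'
  · exact fun g σ => chainMap_equivariant hGd hFm hF g σ
  · exact chainMap_base hGd hFm hF

theorem chain_index_ne_zero {C : ℕ → Subgroup G} (hC : IsGroupChain C) :
    ∀ ℓ, (C ℓ).index ≠ 0 := by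
  intro ℓ
  induction ℓ with
  | zero => rw [hC.1, Subgroup.index_top]; exact one_ne_zero
  | succ n ih =>
    have h := Subgroup.relIndex_mul_index (hC.2 n).1
    rw [← h]
    exact mul_ne_zero (hC.2 n).2 ih

end Stmt8Aux

private def interP (f1 f2 : ℕ → ℕ) : ℕ → ℕ × ℕ
  | 0 => (0, f2 0)
  | k+1 =>
    (max (f1 (interP f1 f2 k).2) ((interP f1 f2 k).1 + 1),
     max (f2 (max (f1 (interP f1 f2 k).2) ((interP f1 f2 k).1 + 1)))
       ((interP f1 f2 k).2 + 1))

section Stmt8Aux2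

variable {G : Type*} [Group G]

theorem interlace_of_cofinal {Gc Hc : ℕ → Subgroup G}
    (hG0 : Gc 0 = ⊤) (hGd : ∀ ℓ, Gc (ℓ+1) ≤ Gc ℓ) (hHd : ∀ ℓ, Hc (ℓ+1) ≤ Hc ℓ)
    (hGi : ∀ ℓ, (Gc ℓ).index ≠ 0) (hHi : ∀ j, (Hc j).index ≠ 0)
    (c1 : ∀ j, ∃ ℓ, Gc ℓ ≤ Hc j) (c2 : ∀ ℓ, ∃ j, Hc j ≤ Gc ℓ) :
    ChainsEquivalent Gc Hc := by
  choose f1 hf1 using c1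
  choose f2 hf2 using c2
  set ls : ℕ → ℕ := fun k => (interP f1 f2 k).1 with hlsdef
  set js : ℕ → ℕ := fun k => (interP f1 f2 k).2 with hjsdef
  have hlt : ∀ k, ls k < ls (k+1) :=
    fun k => lt_of_lt_of_le (Nat.lt_succ_self _) (le_max_right _ _)
  have hjlt : ∀ k, js k < js (k+1) :=
    fun k => lt_of_lt_of_le (Nat.lt_succ_self _) (le_max_right _ _)
  have hjge : ∀ k, f2 (ls k) ≤ js k := by
    intro k
    cases k with
    | zero => exact le_refl _
    | succ n => exact le_max_left _ _
  have hlge : ∀ k, f1 (js k) ≤ ls (k+1) := fun k => le_max_left _ _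
  have hlsm : StrictMono ls := strictMono_nat_of_lt_succ hlt
  have hjsm : StrictMono js := strictMono_nat_of_lt_succ hjlt
  set K : ℕ → Subgroup G :=
    fun m => if m % 2 = 0 then Gc (ls (m/2)) else Hc (js (m/2)) with hKdef
  have hK2 : ∀ k, K (2*k) = Gc (ls k) := by
    intro k
    show (if (2*k) % 2 = 0 then Gc (ls ((2*k)/2)) else Hc (js ((2*k)/2))) = _
    rw [if_pos (by omega), show (2*k)/2 = k by omega]
  have hK2' : ∀ k, K (2*k+1) = Hc (js k) := by
    intro k
    show (if (2*k+1) % 2 = 0 then Gc (ls ((2*k+1)/2)) else Hc (js ((2*k+1)/2))) = _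
    rw [if_neg (by omega), show (2*k+1)/2 = k by omega]
  have hdesc : ∀ m, K (m+1) ≤ K m := by
    intro m
    rcases Nat.even_or_odd m with ⟨k, hk⟩ | ⟨k, hk⟩
    · have hm : m = 2*k := by omega
      rw [hm, hK2' k, hK2 k]
      exact le_trans (chainDesc_le hHd (hjge k)) (hf2 (ls k))
    · have hm : m = 2*k+1 := by omega
      rw [hm, show 2*k+1+1 = 2*(k+1) by ring, hK2 (k+1), hK2' k]
      exact le_trans (chainDesc_le hGd (hlge k)) (hf1 (js k))
  have hKi : ∀ m, (K m).index ≠ 0 := by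
    intro m
    show (if m % 2 = 0 then Gc (ls (m/2)) else Hc (js (m/2))).index ≠ 0
    split
    · exact hGi _
    · exact hHi _
  have hrel : ∀ m, (K (m+1)).relIndex (K m) ≠ 0 := by
    intro m
    have h := Subgroup.relIndex_mul_index (hdesc m)
    intro h0
    rw [h0, zero_mul] at h
    exact hKi (m+1) h.symm
  refine ⟨K, ⟨?_, fun m => ⟨hdesc m, hrel m⟩⟩, ls, js, hlsm, hjsm,
    fun k => ⟨hK2 k, hK2' k⟩⟩
  show (if 0 % 2 = 0 then Gc (ls (0/2)) else Hc (js (0/2))) = ⊤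
  rw [if_pos rfl]
  show Gc ((interP f1 f2 0).1) = ⊤
  rw [show (interP f1 f2 0).1 = 0 from rfl, hG0]

theorem cofinal_of_tau {Gc Hc : ℕ → Subgroup G} (hGd : ∀ ℓ, Gc (ℓ+1) ≤ Gc ℓ)
    (τ : chainLimitSet Gc ≃ chainLimitSet Hc)
    (hcont : @Continuous _ _ (chainLimitTop Gc) (chainLimitTop Hc) τ)
    (hequiv : ∀ (g : G) (σ : chainLimitSet Gc),
      τ ⟨fun ℓ => g • (σ : ∀ ℓ : ℕ, G ⧸ Gc ℓ) ℓ, smul_mem_chainLimitSet g σ.2⟩ =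
        ⟨fun ℓ => g • ((τ σ : ∀ ℓ : ℕ, G ⧸ Hc ℓ)) ℓ,
          smul_mem_chainLimitSet g (τ σ).2⟩)
    (hbase : τ (chainBasepoint Gc) = chainBasepoint Hc) (j : ℕ) :
    ∃ ℓ, Gc ℓ ≤ Hc j := by
  by_contra hcon
  push_neg at hcon
  have hgs : ∀ ℓ : ℕ, ∃ g : G, g ∈ Gc ℓ ∧ g ∉ Hc j := by
    intro ℓ
    obtain ⟨g, hg1, hg2⟩ := SetLike.not_le_iff_exists.mp (hcon ℓ)
    exact ⟨g, hg1, hg2⟩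
  choose g hg1 hg2 using hgs
  set σ : ℕ → chainLimitSet Gc := fun n =>
    ⟨fun ℓ => g n • (chainBasepoint Gc : ∀ ℓ : ℕ, G ⧸ Gc ℓ) ℓ,
      smul_mem_chainLimitSet (g n) (chainBasepoint Gc).2⟩ with hσdef
  have hσtend : Filter.Tendsto σ Filter.atTop
      (@nhds _ (chainLimitTop Gc) (chainBasepoint Gc)) := by
    rw [tendsto_chainLimit_iff]
    intro i
    filter_upwards [Filter.eventually_ge_atTop i] with n hn
    show g n • ((1 : G) : G ⧸ Gc i) = ((1 : G) : G ⧸ Gc i)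
    have e : g n • ((1 : G) : G ⧸ Gc i) = ((g n * 1 : G) : G ⧸ Gc i) := rfl
    rw [e, mul_one]
    exact QuotientGroup.eq.mpr
      (by simpa using (Gc i).inv_mem (chainDesc_le hGd hn (hg1 n)))
  have h2 : Filter.Tendsto (fun n => τ (σ n)) Filter.atTop
      (@nhds _ (chainLimitTop Hc) (chainBasepoint Hc)) := by
    have h := (@Continuous.tendsto _ _ (chainLimitTop Gc) (chainLimitTop Hc) _
      hcont (chainBasepoint Gc)).comp hσtend
    rwa [hbase] at h
  rw [tendsto_chainLimit_iff] at h2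
  have h3 := h2 j
  have hval : ∀ n, (τ (σ n)).1 j = ((g n : G) : G ⧸ Hc j) := by
    intro n
    have hτ : τ (σ n) = ⟨fun ℓ => g n • ((τ (chainBasepoint Gc) : ∀ ℓ : ℕ, G ⧸ Hc ℓ)) ℓ,
        smul_mem_chainLimitSet (g n) (τ (chainBasepoint Gc)).2⟩ :=
      hequiv (g n) (chainBasepoint Gc)
    rw [hτ]
    show g n • ((τ (chainBasepoint Gc) : ∀ ℓ : ℕ, G ⧸ Hc ℓ)) j = _
    rw [hbase]
    show ((g n * 1 : G) : G ⧸ Hc j) = _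
    rw [mul_one]
  have h4 : ∃ n, ((g n : G) : G ⧸ Hc j) = ((1 : G) : G ⧸ Hc j) := by
    obtain ⟨n, hn⟩ := h3.exists
    rw [hval n] at hn
    exact ⟨n, hn⟩
  obtain ⟨n, hn⟩ := h4
  have h5 := QuotientGroup.eq.mp hn
  rw [mul_one] at h5
  exact hg2 n (inv_mem_iff.mp h5)

theorem symm_equivariant {Gc Hc : ℕ → Subgroup G}
    (τ : chainLimitSet Gc ≃ chainLimitSet Hc)
    (hequiv : ∀ (g : G) (σ : chainLimitSet Gc),
      τ ⟨fun ℓ => g • (σ : ∀ ℓ : ℕ, G ⧸ Gc ℓ) ℓ, smul_mem_chainLimitSet g σ.2⟩ =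
        ⟨fun ℓ => g • ((τ σ : ∀ ℓ : ℕ, G ⧸ Hc ℓ)) ℓ,
          smul_mem_chainLimitSet g (τ σ).2⟩)
    (g : G) (σ' : chainLimitSet Hc) :
    τ.symm ⟨fun ℓ => g • (σ' : ∀ ℓ : ℕ, G ⧸ Hc ℓ) ℓ, smul_mem_chainLimitSet g σ'.2⟩ =
      ⟨fun ℓ => g • ((τ.symm σ' : ∀ ℓ : ℕ, G ⧸ Gc ℓ)) ℓ,
        smul_mem_chainLimitSet g (τ.symm σ').2⟩ := by
  have h1 := hequiv g (τ.symm σ')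
  have h2 : (⟨fun ℓ => g • ((τ (τ.symm σ') : ∀ ℓ : ℕ, G ⧸ Hc ℓ)) ℓ,
      smul_mem_chainLimitSet g (τ (τ.symm σ')).2⟩ : chainLimitSet Hc)
      = ⟨fun ℓ => g • (σ' : ∀ ℓ : ℕ, G ⧸ Hc ℓ) ℓ, smul_mem_chainLimitSet g σ'.2⟩ := by
    apply Subtype.ext
    funext ℓ
    rw [Equiv.apply_symm_apply]
  rw [h2] at h1
  exact ((Equiv.eq_symm_apply τ).mpr h1).symm

end Stmt8Aux2

section Stmt8Aux3

variable {G : Type*} [Group G]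

theorem conj_mem {g0 : G} {H : Subgroup G} {c : G} (hc : c ∈ H) :
    g0 * c * g0⁻¹ ∈ conjSubgroup g0 H :=
  Subgroup.mem_map.mpr ⟨c, hc, rfl⟩

theorem conj_mem' {g0 : G} {H : Subgroup G} {x : G} (hx : x ∈ conjSubgroup g0 H) :
    g0⁻¹ * x * g0 ∈ H := by
  obtain ⟨c, hc, hceq⟩ := Subgroup.mem_map.mp hx
  have h : g0⁻¹ * x * g0 = c := by
    rw [← hceq]
    show g0⁻¹ * (g0 * c * g0⁻¹) * g0 = c
    group
  rw [h]
  exact hc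

def rmulQ (g0 : G) (H : Subgroup G) : G ⧸ H → G ⧸ conjSubgroup g0 H :=
  Quotient.map' (· * g0⁻¹) fun a b hab => QuotientGroup.leftRel_apply.mpr (by
    have h := QuotientGroup.leftRel_apply.mp hab
    have e : (a * g0⁻¹)⁻¹ * (b * g0⁻¹) = g0 * (a⁻¹ * b) * g0⁻¹ := by group
    rw [e]
    exact conj_mem h)

def rmulQinv (g0 : G) (H : Subgroup G) : G ⧸ conjSubgroup g0 H → G ⧸ H :=
  Quotient.map' (· * g0) fun a b hab => QuotientGroup.leftRel_apply.mpr (by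
    have h := QuotientGroup.leftRel_apply.mp hab
    have e : (a * g0)⁻¹ * (b * g0) = g0⁻¹ * (a⁻¹ * b) * g0 := by group
    rw [e]
    exact conj_mem' h)

theorem rmulQ_mk (g0 : G) (H : Subgroup G) (x : G) :
    rmulQ g0 H (x : G ⧸ H) = ((x * g0⁻¹ : G) : G ⧸ conjSubgroup g0 H) := rfl

theorem rmulQinv_mk (g0 : G) (H : Subgroup G) (x : G) :
    rmulQinv g0 H ((x : G) : G ⧸ conjSubgroup g0 H) = ((x * g0 : G) : G ⧸ H) := rfl

theorem rmulQ_left_inv (g0 : G) (H : Subgroup G) (x : G ⧸ H) :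
    rmulQinv g0 H (rmulQ g0 H x) = x := by
  induction x using Quotient.inductionOn' with
  | h a =>
    show ((a * g0⁻¹ * g0 : G) : G ⧸ H) = _
    rw [inv_mul_cancel_right]

theorem rmulQ_right_inv (g0 : G) (H : Subgroup G) (x : G ⧸ conjSubgroup g0 H) :
    rmulQ g0 H (rmulQinv g0 H x) = x := by
  induction x using Quotient.inductionOn' with
  | h a =>
    show ((a * g0 * g0⁻¹ : G) : G ⧸ conjSubgroup g0 H) = _
    rw [mul_inv_cancel_right]

theorem rmulQ_smul (g0 : G) (H : Subgroup G) (g : G) (x : G ⧸ H) :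
    rmulQ g0 H (g • x) = g • rmulQ g0 H x := by
  induction x using Quotient.inductionOn' with
  | h a =>
    show ((g * a * g0⁻¹ : G) : G ⧸ conjSubgroup g0 H) = ((g * (a * g0⁻¹) : G) : _)
    rw [mul_assoc]

theorem conj_top (g0 : G) : conjSubgroup g0 (⊤ : Subgroup G) = ⊤ :=
  Subgroup.map_top_of_surjective _ (MulAut.conj g0).surjective

theorem conj_index (g0 : G) (H : Subgroup G) :
    (conjSubgroup g0 H).index = H.index := by
  show Nat.card (G ⧸ conjSubgroup g0 H) = Nat.card (G ⧸ H)
  exact Nat.card_congr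
    ⟨rmulQinv g0 H, rmulQ g0 H, rmulQ_right_inv g0 H, rmulQ_left_inv g0 H⟩

theorem trans_mem {Gc : ℕ → Subgroup G} {gs : ℕ → G}
    (hcompat : ∀ ℓ, (gs ℓ)⁻¹ * gs (ℓ+1) ∈ Gc ℓ)
    {σ : ∀ ℓ : ℕ, G ⧸ Gc ℓ} (hσ : σ ∈ chainLimitSet Gc) :
    (fun ℓ => rmulQ (gs ℓ) (Gc ℓ) (σ ℓ)) ∈
      chainLimitSet (fun ℓ => conjSubgroup (gs ℓ) (Gc ℓ)) := by
  intro ℓ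
  obtain ⟨g, h1, h2⟩ := hσ ℓ
  refine ⟨g * (gs (ℓ+1))⁻¹, ?_, ?_⟩
  · show rmulQ (gs ℓ) (Gc ℓ) (σ ℓ) = _
    rw [h1, rmulQ_mk]
    apply QuotientGroup.eq.mpr
    have e : (g * (gs ℓ)⁻¹)⁻¹ * (g * (gs (ℓ+1))⁻¹)
        = gs ℓ * ((gs ℓ)⁻¹ * gs (ℓ+1))⁻¹ * (gs ℓ)⁻¹ := by group
    rw [e]
    exact conj_mem ((Gc ℓ).inv_mem (hcompat ℓ))
  · show rmulQ (gs (ℓ+1)) (Gc (ℓ+1)) (σ (ℓ+1)) = _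
    rw [h2, rmulQ_mk]

theorem trans_mem_inv {Gc : ℕ → Subgroup G} {gs : ℕ → G}
    (hcompat : ∀ ℓ, (gs ℓ)⁻¹ * gs (ℓ+1) ∈ Gc ℓ)
    {σ : ∀ ℓ : ℕ, G ⧸ conjSubgroup (gs ℓ) (Gc ℓ)}
    (hσ : σ ∈ chainLimitSet (fun ℓ => conjSubgroup (gs ℓ) (Gc ℓ))) :
    (fun ℓ => rmulQinv (gs ℓ) (Gc ℓ) (σ ℓ)) ∈ chainLimitSet Gc := by
  intro ℓ
  obtain ⟨h, h1, h2⟩ := hσ ℓ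
  refine ⟨h * gs (ℓ+1), ?_, ?_⟩
  · show rmulQinv (gs ℓ) (Gc ℓ) (σ ℓ) = _
    rw [h1, rmulQinv_mk]
    apply QuotientGroup.eq.mpr
    have e : (h * gs ℓ)⁻¹ * (h * gs (ℓ+1)) = (gs ℓ)⁻¹ * gs (ℓ+1) := by group
    rw [e]
    exact hcompat ℓ
  · show rmulQinv (gs (ℓ+1)) (Gc (ℓ+1)) (σ (ℓ+1)) = _
    rw [h2, rmulQinv_mk]

def transEquiv {Gc : ℕ → Subgroup G} {gs : ℕ → G}
    (hcompat : ∀ ℓ, (gs ℓ)⁻¹ * gs (ℓ+1) ∈ Gc ℓ) :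
    chainLimitSet Gc ≃ chainLimitSet (fun ℓ => conjSubgroup (gs ℓ) (Gc ℓ)) where
  toFun σ := ⟨fun ℓ => rmulQ (gs ℓ) (Gc ℓ) (σ.1 ℓ), trans_mem hcompat σ.2⟩
  invFun σ := ⟨fun ℓ => rmulQinv (gs ℓ) (Gc ℓ) (σ.1 ℓ), trans_mem_inv hcompat σ.2⟩
  left_inv σ := Subtype.ext (funext fun ℓ => rmulQ_left_inv (gs ℓ) (Gc ℓ) (σ.1 ℓ))
  right_inv σ := Subtype.ext (funext fun ℓ => rmulQ_right_inv (gs ℓ) (Gc ℓ) (σ.1 ℓ))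

theorem transEquiv_continuous {Gc : ℕ → Subgroup G} {gs : ℕ → G}
    (hcompat : ∀ ℓ, (gs ℓ)⁻¹ * gs (ℓ+1) ∈ Gc ℓ) :
    @Continuous _ _ (chainLimitTop Gc) (chainLimitTop (fun ℓ => conjSubgroup (gs ℓ) (Gc ℓ)))
      (transEquiv hcompat) :=
  continuous_chainLimit_of_coord _ id (fun i => rmulQ (gs i) (Gc i)) (fun _ _ => rfl)

theorem transEquiv_symm_continuous {Gc : ℕ → Subgroup G} {gs : ℕ → G}
    (hcompat : ∀ ℓ, (gs ℓ)⁻¹ * gs (ℓ+1) ∈ Gc ℓ) :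
    @Continuous _ _ (chainLimitTop (fun ℓ => conjSubgroup (gs ℓ) (Gc ℓ))) (chainLimitTop Gc)
      (transEquiv hcompat).symm :=
  continuous_chainLimit_of_coord _ id (fun i => rmulQinv (gs i) (Gc i)) (fun _ _ => rfl)

theorem transEquiv_equivariant {Gc : ℕ → Subgroup G} {gs : ℕ → G}
    (hcompat : ∀ ℓ, (gs ℓ)⁻¹ * gs (ℓ+1) ∈ Gc ℓ) (g : G) (σ : chainLimitSet Gc) :
    transEquiv hcompat ⟨fun ℓ => g • (σ : ∀ ℓ : ℕ, G ⧸ Gc ℓ) ℓ, smul_mem_chainLimitSet g σ.2⟩ =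
      ⟨fun ℓ => g • ((transEquiv hcompat σ : ∀ ℓ : ℕ, G ⧸ conjSubgroup (gs ℓ) (Gc ℓ))) ℓ,
        smul_mem_chainLimitSet g (transEquiv hcompat σ).2⟩ :=
  Subtype.ext (funext fun ℓ => rmulQ_smul (gs ℓ) (Gc ℓ) g (σ.1 ℓ))

theorem conj_desc {Gc : ℕ → Subgroup G} (hGd : ∀ ℓ, Gc (ℓ+1) ≤ Gc ℓ) {gs : ℕ → G}
    (hcompat : ∀ ℓ, (gs ℓ)⁻¹ * gs (ℓ+1) ∈ Gc ℓ) (ℓ : ℕ) :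
    conjSubgroup (gs (ℓ+1)) (Gc (ℓ+1)) ≤ conjSubgroup (gs ℓ) (Gc ℓ) := by
  intro x hx
  obtain ⟨c, hc, hceq⟩ := Subgroup.mem_map.mp hx
  have hx' : x = gs (ℓ+1) * c * (gs (ℓ+1))⁻¹ := hceq.symm
  have e : x = gs ℓ * (((gs ℓ)⁻¹ * gs (ℓ+1)) * c * ((gs ℓ)⁻¹ * gs (ℓ+1))⁻¹) * (gs ℓ)⁻¹ := by
    rw [hx']
    group
  rw [e]
  exact conj_mem ((Gc ℓ).mul_mem ((Gc ℓ).mul_mem (hcompat ℓ) (hGd ℓ hc))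
    ((Gc ℓ).inv_mem (hcompat ℓ)))

theorem exists_reps {Gc : ℕ → Subgroup G} (hGd : ∀ ℓ, Gc (ℓ+1) ≤ Gc ℓ)
    (x : chainLimitSet Gc) :
    ∃ gs : ℕ → G, (∀ ℓ, (x : ∀ ℓ : ℕ, G ⧸ Gc ℓ) ℓ = ((gs ℓ : G) : G ⧸ Gc ℓ)) ∧
      ∀ ℓ, (gs ℓ)⁻¹ * gs (ℓ+1) ∈ Gc ℓ := by
  choose gs hgs using fun ℓ => QuotientGroup.mk_surjective (x.1 ℓ)
  refine ⟨gs, fun ℓ => (hgs ℓ).symm, fun ℓ => ?_⟩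
  obtain ⟨g, h1, h2⟩ := x.2 ℓ
  have e1 : (gs ℓ)⁻¹ * g ∈ Gc ℓ := QuotientGroup.eq.mp ((hgs ℓ).trans h1)
  have e2 : g⁻¹ * gs (ℓ+1) ∈ Gc (ℓ+1) :=
    QuotientGroup.eq.mp (h2.symm.trans (hgs (ℓ+1)).symm)
  have e3 : (gs ℓ)⁻¹ * gs (ℓ+1) = ((gs ℓ)⁻¹ * g) * (g⁻¹ * gs (ℓ+1)) := by group
  rw [e3]
  exact (Gc ℓ).mul_mem e1 (hGd ℓ e2)

end Stmt8Aux3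
/-- Equivalence (resp. conjugate equivalence) of group chains corresponds
to basepoint-preserving (resp. arbitrary) equivariant homeomorphism of the inverse limit
`G`-spaces. -/
theorem stmt8 {G : Type*} [Group G] [Countable G] (Gc Hc : ℕ → Subgroup G)
    (hGc : IsGroupChain Gc) (hHc : IsGroupChain Hc) :
    (ChainsEquivalent Gc Hc ↔
      ∃ τ : chainLimitSet Gc ≃ chainLimitSet Hc,
        @Continuous _ _ (chainLimitTop Gc) (chainLimitTop Hc) τ ∧
        @Continuous _ _ (chainLimitTop Hc) (chainLimitTop Gc) τ.symm ∧
        (∀ (g : G) (σ : chainLimitSet Gc),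
          τ ⟨fun ℓ => g • (σ : ∀ ℓ : ℕ, G ⧸ Gc ℓ) ℓ, smul_mem_chainLimitSet g σ.2⟩ =
            ⟨fun ℓ => g • ((τ σ : ∀ ℓ : ℕ, G ⧸ Hc ℓ)) ℓ,
              smul_mem_chainLimitSet g (τ σ).2⟩) ∧
        τ (chainBasepoint Gc) = chainBasepoint Hc) ∧
    (ChainsConjugateEquivalent Gc Hc ↔
      ∃ τ : chainLimitSet Gc ≃ chainLimitSet Hc,
        @Continuous _ _ (chainLimitTop Gc) (chainLimitTop Hc) τ ∧
        @Continuous _ _ (chainLimitTop Hc) (chainLimitTop Gc) τ.symm ∧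
        ∀ (g : G) (σ : chainLimitSet Gc),
          τ ⟨fun ℓ => g • (σ : ∀ ℓ : ℕ, G ⧸ Gc ℓ) ℓ, smul_mem_chainLimitSet g σ.2⟩ =
            ⟨fun ℓ => g • ((τ σ : ∀ ℓ : ℕ, G ⧸ Hc ℓ)) ℓ,
              smul_mem_chainLimitSet g (τ σ).2⟩) := by
  
  have hGd : ∀ ℓ, Gc (ℓ+1) ≤ Gc ℓ := fun ℓ => (hGc.2 ℓ).1
  have hHd : ∀ ℓ, Hc (ℓ+1) ≤ Hc ℓ := fun ℓ => (hHc.2 ℓ).1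
  constructor
  · constructor
    · intro h
      exact forwardPair hGd hHd h
    · rintro ⟨τ, hc1, hc2, heq, hb⟩
      have hsymb : τ.symm (chainBasepoint Hc) = chainBasepoint Gc :=
        (Equiv.symm_apply_eq τ).mpr hb.symm
      exact interlace_of_cofinal hGc.1 hGd hHd (chain_index_ne_zero hGc)
        (chain_index_ne_zero hHc)
        (fun j => cofinal_of_tau hGd τ hc1 heq hb j)
        (fun ℓ => cofinal_of_tau hHd τ.symm hc2 (symm_equivariant τ heq) hsymb ℓ)
  · constructor
    · rintro ⟨gs, hcompat, hEq⟩
      have hGd' : ∀ ℓ, conjSubgroup (gs (ℓ+1)) (Gc (ℓ+1)) ≤ conjSubgroup (gs ℓ) (Gc ℓ) :=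
        conj_desc hGd hcompat
      obtain ⟨τ₁, hτc1, hτc2, hτeq, _⟩ :=
        forwardPair (Gc := fun ℓ => conjSubgroup (gs ℓ) (Gc ℓ)) hGd' hHd hEq
      refine ⟨(transEquiv hcompat).trans τ₁, ?_, ?_, ?_⟩
      · exact @Continuous.comp _ _ _ (chainLimitTop Gc)
          (chainLimitTop (fun ℓ => conjSubgroup (gs ℓ) (Gc ℓ))) (chainLimitTop Hc)
          _ _ hτc1 (transEquiv_continuous hcompat)
      · exact @Continuous.comp _ _ _ (chainLimitTop Hc)
          (chainLimitTop (fun ℓ => conjSubgroup (gs ℓ) (Gc ℓ))) (chainLimitTop Gc)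
          _ _ (transEquiv_symm_continuous hcompat) hτc2
      · intro g σ
        show τ₁ (transEquiv hcompat
            ⟨fun ℓ => g • (σ : ∀ ℓ : ℕ, G ⧸ Gc ℓ) ℓ, smul_mem_chainLimitSet g σ.2⟩) =
          ⟨fun ℓ => g • ((τ₁ (transEquiv hcompat σ) : ∀ ℓ : ℕ, G ⧸ Hc ℓ)) ℓ,
            smul_mem_chainLimitSet g (τ₁ (transEquiv hcompat σ)).2⟩
        rw [transEquiv_equivariant hcompat g σ]
        exact hτeq g (transEquiv hcompat σ)
    · rintro ⟨τ, hc1, hc2, heq⟩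
      obtain ⟨gs, hgs, hcompat⟩ := exists_reps hGd (τ.symm (chainBasepoint Hc))
      refine ⟨gs, hcompat, ?_⟩
      have hGd' : ∀ ℓ, conjSubgroup (gs (ℓ+1)) (Gc (ℓ+1)) ≤ conjSubgroup (gs ℓ) (Gc ℓ) :=
        conj_desc hGd hcompat
      have hSx : transEquiv hcompat (τ.symm (chainBasepoint Hc)) =
          chainBasepoint (fun ℓ => conjSubgroup (gs ℓ) (Gc ℓ)) := by
        apply Subtype.ext
        funext ℓ
        show rmulQ (gs ℓ) (Gc ℓ) ((τ.symm (chainBasepoint Hc)).1 ℓ) = _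
        rw [hgs ℓ, rmulQ_mk]
        show ((gs ℓ * (gs ℓ)⁻¹ : G) : G ⧸ conjSubgroup (gs ℓ) (Gc ℓ)) = ((1 : G) : _)
        rw [mul_inv_cancel]
      set τ' : chainLimitSet (fun ℓ => conjSubgroup (gs ℓ) (Gc ℓ)) ≃ chainLimitSet Hc :=
        (transEquiv hcompat).symm.trans τ with hτ'def
      have hbase' : τ' (chainBasepoint (fun ℓ => conjSubgroup (gs ℓ) (Gc ℓ))) =
          chainBasepoint Hc := by
        show τ ((transEquiv hcompat).symm
          (chainBasepoint (fun ℓ => conjSubgroup (gs ℓ) (Gc ℓ)))) = _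
        rw [show (transEquiv hcompat).symm
            (chainBasepoint (fun ℓ => conjSubgroup (gs ℓ) (Gc ℓ))) =
            τ.symm (chainBasepoint Hc) from (Equiv.symm_apply_eq _).mpr hSx.symm]
        exact Equiv.apply_symm_apply τ _
      have hτ'c1 : @Continuous _ _ (chainLimitTop (fun ℓ => conjSubgroup (gs ℓ) (Gc ℓ)))
          (chainLimitTop Hc) τ' :=
        @Continuous.comp _ _ _ (chainLimitTop (fun ℓ => conjSubgroup (gs ℓ) (Gc ℓ)))
          (chainLimitTop Gc) (chainLimitTop Hc) _ _ hc1 (transEquiv_symm_continuous hcompat)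
      have hτ'c2 : @Continuous _ _ (chainLimitTop Hc)
          (chainLimitTop (fun ℓ => conjSubgroup (gs ℓ) (Gc ℓ))) τ'.symm :=
        @Continuous.comp _ _ _ (chainLimitTop Hc) (chainLimitTop Gc)
          (chainLimitTop (fun ℓ => conjSubgroup (gs ℓ) (Gc ℓ)))
          _ _ (transEquiv_continuous hcompat) hc2
      have hτ'eq : ∀ (g : G) (σ' : chainLimitSet (fun ℓ => conjSubgroup (gs ℓ) (Gc ℓ))),
          τ' ⟨fun ℓ => g • (σ' : ∀ ℓ : ℕ, G ⧸ conjSubgroup (gs ℓ) (Gc ℓ)) ℓ,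
              smul_mem_chainLimitSet g σ'.2⟩ =
            ⟨fun ℓ => g • ((τ' σ' : ∀ ℓ : ℕ, G ⧸ Hc ℓ)) ℓ,
              smul_mem_chainLimitSet g (τ' σ').2⟩ := by
        intro g σ'
        show τ ((transEquiv hcompat).symm
            ⟨fun ℓ => g • (σ' : ∀ ℓ : ℕ, G ⧸ conjSubgroup (gs ℓ) (Gc ℓ)) ℓ,
              smul_mem_chainLimitSet g σ'.2⟩) =
          ⟨fun ℓ => g • ((τ ((transEquiv hcompat).symm σ') : ∀ ℓ : ℕ, G ⧸ Hc ℓ)) ℓ,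
            smul_mem_chainLimitSet g (τ ((transEquiv hcompat).symm σ')).2⟩
        rw [symm_equivariant (transEquiv hcompat) (transEquiv_equivariant hcompat) g σ']
        exact heq g ((transEquiv hcompat).symm σ')
      have hG0' : conjSubgroup (gs 0) (Gc 0) = ⊤ := by
        rw [hGc.1]
        exact conj_top (gs 0)
      have hGi' : ∀ ℓ, (conjSubgroup (gs ℓ) (Gc ℓ)).index ≠ 0 := fun ℓ => by
        rw [conj_index]
        exact chain_index_ne_zero hGc ℓ
      exact interlace_of_cofinal hG0' hGd' hHd hGi' (chain_index_ne_zero hHc)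
        (fun j => cofinal_of_tau hGd' τ' hτ'c1 hτ'eq hbase' j)
        (fun ℓ => cofinal_of_tau hHd τ'.symm hτ'c2 (symm_equivariant τ' hτ'eq)
          ((Equiv.symm_apply_eq τ').mpr hbase'.symm) ℓ)
end

section
/- Let (X,G,Φ) be a Cantor action, let {U_ℓ} be an adapted neighborhood basis at x ∈ X with group chain G_ℓ = G_{U_ℓ}, and fix ℓ ≥ 0. If f ∈ G(Φ) satisfies f(x) = x and f ∘ Φ(g) = Φ(g) ∘ f for all g ∈ G_ℓ, then f(z) = z for all z ∈ U_ℓ. (That is, the ℓ-th centralizer group Z_ℓ is contained in the ℓ-th stabilizer group K_ℓ.) -/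
open Set Topology Filter

/-- The centralizer group `Z_ℓ` is contained in the stabilizer group
`K_ℓ`. -/
theorem stmt10 {X : Type*} [MetricSpace X] [CompactSpace X] [TotallyDisconnectedSpace X]
    [Nonempty X] (hX : Perfect (Set.univ : Set X))
    {G : Type*} [Group G] [Countable G] (Φ : G → X ≃ₜ X) (hΦ : IsCantorAction Φ)
    (x : X) (U : ℕ → Set X) (hU : IsAdaptedBasis Φ x U) (ℓ : ℕ)
    (f : C(X, X)) (hf : f ∈ actionClosure Φ) (hfx : f x = x)
    (hcomm : ∀ g : G, Φ g '' U ℓ = U ℓ → ∀ z : X, f (Φ g z) = Φ g (f z)) :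
    ∀ z ∈ U ℓ, f z = z := by
  intro z hz
  obtain ⟨hU0, hadapt, hxU, hdesc, hcap⟩ := hU
  obtain ⟨hne, hclopen, hadp⟩ := hadapt ℓ
  -- The set of fixed points of f is closed
  have hclosed : IsClosed {w : X | f w = w} := isClosed_eq f.continuous continuous_id
  -- z is in the closure of the fixed-point set
  have hzcl : z ∈ closure {w : X | f w = w} := by
    rw [mem_closure_iff]
    intro O hO hzO
    have hOU : IsOpen (O ∩ U ℓ) := hO.inter hclopen.2
    have hzOU : z ∈ O ∩ U ℓ := ⟨hzO, hz⟩
    have hdense := hΦ.2.1 x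
    obtain ⟨w, hwrange, hwO, hwU⟩ := hdense.exists_mem_open hOU ⟨z, hzOU⟩
    obtain ⟨g, rfl⟩ := hwrange
    have hgstab : ⇑(Φ g) '' U ℓ = U ℓ := by
      apply hadp
      exact ⟨Φ g x, ⟨x, hxU ℓ, rfl⟩, hwU⟩
    have hfix : f (Φ g x) = Φ g x := by
      rw [hcomm g hgstab x, hfx]
    exact ⟨Φ g x, hwO, hfix⟩
  rwa [hclosed.closure_eq] at hzcl
end
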